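/- arXiv:1912.13325 — 3 statements merged into one kernel-verified Lean document; each statement's English description precedes it below -/
import Mathlib

section
/- Let H = { (x1, x2, x3, x4, u1, u2, u3) ∈ ℚ⁷ : x1 + x2 + x3 + x4 + 1 = u1 + u2 + u3 }. The 24 maps permuting the coordinates (x1,x2,x3,x4), the 6 maps permuting the coordinates (u1,u2,u3), and the affine involution s(x1,x2,x3,x4,u1,u2,u3) = (u3−x1, u3−x2, x3, x4, 1−u1+x3+x4, 1−u2+x3+x4, u3) all map H bijectively onto H. The subgroup of the group of bijections of H generated by (the restrictions to H of) these maps is finite of order 23040. -/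
namespace Stmt14

/-- The ambient space `ℚ⁴ × ℚ³` of upper and lower arguments of a `₄Φ₃` series. -/
abbrev V : Type := (Fin 4 → ℚ) × (Fin 3 → ℚ)

/-- The balance hyperplane `x₁ + x₂ + x₃ + x₄ + 1 = u₁ + u₂ + u₃`. -/
def H : Set V := {p | (∑ a, p.1 a) + 1 = ∑ b, p.2 b}

/-- Permutation of the upper coordinates `(x₁,x₂,x₃,x₄)`. -/
def permX (σ : Equiv.Perm (Fin 4)) : V → V := fun p => (p.1 ∘ σ, p.2)

/-- Permutation of the lower coordinates `(u₁,u₂,u₃)`. -/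
def permU (τ : Equiv.Perm (Fin 3)) : V → V := fun p => (p.1, p.2 ∘ τ)

/-- The affine involution `s` corresponding to Sears' transformation:
`s(x₁,x₂,x₃,x₄,u₁,u₂,u₃) = (u₃−x₁, u₃−x₂, x₃, x₄, 1−u₁+x₃+x₄, 1−u₂+x₃+x₄, u₃)`. -/
def sears : V → V := fun p =>
  (![p.2 2 - p.1 0, p.2 2 - p.1 1, p.1 2, p.1 3],
   ![1 - p.2 0 + p.1 2 + p.1 3, 1 - p.2 1 + p.1 2 + p.1 3, p.2 2])

section VecSimp
variable {α : Type*}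
@[simp] lemma vec3_0 (a b c : α) : ![a,b,c] (0 : Fin 3) = a := rfl
@[simp] lemma vec3_1 (a b c : α) : ![a,b,c] (1 : Fin 3) = b := rfl
@[simp] lemma vec3_2 (a b c : α) : ![a,b,c] (2 : Fin 3) = c := rfl
@[simp] lemma vec4_0 (a b c d : α) : ![a,b,c,d] (0 : Fin 4) = a := rfl
@[simp] lemma vec4_1 (a b c d : α) : ![a,b,c,d] (1 : Fin 4) = b := rfl
@[simp] lemma vec4_2 (a b c d : α) : ![a,b,c,d] (2 : Fin 4) = c := rfl
@[simp] lemma vec4_3 (a b c d : α) : ![a,b,c,d] (3 : Fin 4) = d := rfl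
@[simp] lemma vec6_0 (a b c d e f : α) : ![a,b,c,d,e,f] (0 : Fin 6) = a := rfl
@[simp] lemma vec6_1 (a b c d e f : α) : ![a,b,c,d,e,f] (1 : Fin 6) = b := rfl
@[simp] lemma vec6_2 (a b c d e f : α) : ![a,b,c,d,e,f] (2 : Fin 6) = c := rfl
@[simp] lemma vec6_3 (a b c d e f : α) : ![a,b,c,d,e,f] (3 : Fin 6) = d := rfl
@[simp] lemma vec6_4 (a b c d e f : α) : ![a,b,c,d,e,f] (4 : Fin 6) = e := rfl
@[simp] lemma vec6_5 (a b c d e f : α) : ![a,b,c,d,e,f] (5 : Fin 6) = f := rfl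
end VecSimp

lemma mem_H_iff (p : V) : p ∈ H ↔
    p.1 0 + p.1 1 + p.1 2 + p.1 3 + 1 = p.2 0 + p.2 1 + p.2 2 := by
  simp [H, Fin.sum_univ_four, Fin.sum_univ_three]

/-- Coordinates in which the symmetry group acts by signed permutations. -/
def emap (p : V) : Fin 6 → ℚ :=
  ![(p.1 0 + p.1 1 - p.1 2 - p.1 3)/2,
    (p.1 0 - p.1 1 + p.1 2 - p.1 3)/2,
    (p.1 0 - p.1 1 - p.1 2 + p.1 3)/2,
    (-p.2 0 - p.2 1 + p.2 2 + 1)/2,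
    (-p.2 0 + p.2 1 + p.2 2 - 1)/2,
    (p.2 0 - p.2 1 + p.2 2 - 1)/2]

def zmap (y : Fin 6 → ℚ) : V :=
  (![(y 0 + y 1 + y 2 + y 4 + y 5 - y 3 + 1)/2,
     (y 0 - y 1 - y 2 + y 4 + y 5 - y 3 + 1)/2,
     (-y 0 + y 1 - y 2 + y 4 + y 5 - y 3 + 1)/2,
     (-y 0 - y 1 + y 2 + y 4 + y 5 - y 3 + 1)/2],
   ![y 5 - y 3 + 1, y 4 - y 3 + 1, y 4 + y 5 + 1])

lemma zmap_mem (y : Fin 6 → ℚ) : zmap y ∈ H := by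
  rw [mem_H_iff]; simp [zmap]; ring

lemma zmap_emap {p : V} (hp : p ∈ H) : zmap (emap p) = p := by
  rw [mem_H_iff] at hp
  obtain ⟨x, u⟩ := p
  refine Prod.ext (funext fun i => ?_) (funext fun i => ?_) <;> fin_cases i <;>
    simp [zmap, emap] <;> linarith

lemma emap_zmap (y : Fin 6 → ℚ) : emap (zmap y) = y := by
  funext i; fin_cases i <;> simp [zmap, emap] <;> ring

/-- `H` as coordinates. -/
def eH : ↥H ≃ (Fin 6 → ℚ) where
  toFun p := emap p
  invFun y := ⟨zmap y, zmap_mem y⟩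
  left_inv p := Subtype.ext (zmap_emap p.2)
  right_inv y := emap_zmap y

abbrev Nn : Type := Fin 6 → Multiplicative (ZMod 2)

def phi : Equiv.Perm (Fin 6) →* MulAut Nn where
  toFun σ :=
    { toFun := fun ε => ε ∘ σ.symm
      invFun := fun ε => ε ∘ σ
      left_inv := fun ε => by funext i; simp
      right_inv := fun ε => by funext i; simp
      map_mul' := fun ε ε' => rfl }
  map_one' := by ext ε i; rfl
  map_mul' σ τ := by ext ε i; rfl

abbrev W : Type := SemidirectProduct Nn (Equiv.Perm (Fin 6)) phi

noncomputable def chi : Multiplicative (ZMod 2) →* ℚ where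
  toFun g := if Multiplicative.toAdd g = 0 then 1 else -1
  map_one' := by norm_num
  map_mul' g h := by
    have h2 : ∀ z : ZMod 2, z = 0 ∨ z = 1 := by decide
    rcases h2 (Multiplicative.toAdd g) with hg | hg <;>
      rcases h2 (Multiplicative.toAdd h) with hh | hh <;>
      simp only [toAdd_mul, hg, hh] <;> norm_num <;> decide

lemma chi_sq (g : Multiplicative (ZMod 2)) : chi g * chi g = 1 := by
  rw [← map_mul, show g * g = 1 by revert g; decide, map_one]

lemma chi_gg : chi (Multiplicative.ofAdd (1 : ZMod 2)) = -1 := by norm_num [chi]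

noncomputable def f1 : Nn →* Equiv.Perm (Fin 6 → ℚ) where
  toFun ε :=
    { toFun := fun y i => chi (ε i) * y i
      invFun := fun y i => chi (ε i) * y i
      left_inv := fun y => by
        funext i; change chi (ε i) * (chi (ε i) * y i) = y i
        rw [← mul_assoc, chi_sq, one_mul]
      right_inv := fun y => by
        funext i; change chi (ε i) * (chi (ε i) * y i) = y i
        rw [← mul_assoc, chi_sq, one_mul] }
  map_one' := by ext y i; show chi 1 * y i = y i; rw [map_one, one_mul]
  map_mul' ε ε' := by
    ext y i
    show chi (ε i * ε' i) * y i = chi (ε i) * (chi (ε' i) * y i)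
    rw [map_mul]; ring

def f2 : Equiv.Perm (Fin 6) →* Equiv.Perm (Fin 6 → ℚ) where
  toFun σ := Equiv.arrowCongr σ (Equiv.refl ℚ)
  map_one' := by ext y i; rfl
  map_mul' σ τ := by ext y i; rfl

lemma compat : ∀ σ, f1.comp (phi σ).toMonoidHom =
    (MulAut.conj (f2 σ)).toMonoidHom.comp f1 := by
  intro σ; ext ε y i
  simp only [MonoidHom.comp_apply, MulEquiv.coe_toMonoidHom, MulAut.conj_apply]
  rw [← map_inv f2]
  simp only [Equiv.Perm.mul_apply]
  show chi ((ε ∘ σ.symm) i) * y i = chi (ε (σ.symm i)) * (Equiv.arrowCongr σ⁻¹ (Equiv.refl ℚ)) y (σ.symm i)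
  simp [Equiv.arrowCongr, Equiv.Perm.inv_def]

noncomputable def Phi : W →* Equiv.Perm (Fin 6 → ℚ) :=
  SemidirectProduct.lift f1 f2 compat

lemma Phi_apply (ε : Nn) (σ : Equiv.Perm (Fin 6)) (y : Fin 6 → ℚ) (i : Fin 6) :
    Phi ⟨ε, σ⟩ y i = chi (ε i) * y (σ⁻¹ i) := by
  have h : (⟨ε, σ⟩ : W) = SemidirectProduct.inl ε * SemidirectProduct.inr σ := by
    ext <;> simp
  rw [h]
  simp only [Phi, map_mul, SemidirectProduct.lift_inl, SemidirectProduct.lift_inr]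
  rfl

lemma Phi_injective : Function.Injective Phi := by
  rw [injective_iff_map_eq_one]
  rintro ⟨ε, σ⟩ h
  have hy : ∀ i : Fin 6, chi (ε i) * (((σ⁻¹ i : Fin 6) : ℕ) + 1 : ℚ)
      = ((i : ℕ) : ℚ) + 1 := by
    intro i
    have h0 : Phi ⟨ε, σ⟩ (fun j : Fin 6 => ((j : ℕ) : ℚ) + 1) i
        = (fun j : Fin 6 => ((j : ℕ) : ℚ) + 1) i :=
      congrFun (congrArg (fun (g : Equiv.Perm (Fin 6 → ℚ)) =>
        g (fun j : Fin 6 => ((j : ℕ) : ℚ) + 1)) h) i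
    rw [Phi_apply] at h0
    simpa using h0
  have hchi : ∀ i, ε i = 1 ∧ σ⁻¹ i = i := by
    intro i
    have h2 : ε i = 1 ∨ ε i = Multiplicative.ofAdd (1 : ZMod 2) := by
      revert i; intro i
      rcases (show ∀ z : Multiplicative (ZMod 2),
        z = 1 ∨ z = Multiplicative.ofAdd (1 : ZMod 2) by decide) (ε i) with h' | h'
      · exact Or.inl h'
      · exact Or.inr h'
    have key := hy i
    rcases h2 with h' | h'
    · rw [h', map_one, one_mul] at key
      have hq : (((σ⁻¹ i : Fin 6) : ℕ) : ℚ) = (((i : Fin 6) : ℕ) : ℚ) := by linarith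
      exact ⟨h', Fin.ext (Nat.cast_injective hq)⟩
    · rw [h', chi_gg] at key
      exfalso
      have h1 : (0:ℚ) ≤ (((σ⁻¹ i : Fin 6) : ℕ) : ℚ) := Nat.cast_nonneg _
      have h2 : (0:ℚ) ≤ (((i : Fin 6) : ℕ) : ℚ) := Nat.cast_nonneg _
      nlinarith [key]
  ext1
  · funext i; exact (hchi i).1
  · simp only [SemidirectProduct.one_right]
    have : σ⁻¹ = 1 := Equiv.ext fun i => (hchi i).2
    have := congrArg (·⁻¹) this
    simpa using this



namespace Card

noncomputable def sgn : W →* Multiplicative (ZMod 2) where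
  toFun w := ∏ i, w.left i
  map_one' := by simp
  map_mul' w v := by
    simp only [SemidirectProduct.mul_left, Pi.mul_apply]
    rw [Finset.prod_mul_distrib]
    congr 1
    show ∏ i, (v.left ∘ w.right.symm) i = ∏ i, v.left i
    exact Equiv.prod_comp w.right.symm v.left

noncomputable abbrev G : Subgroup W := sgn.ker

lemma sgn_surjective : Function.Surjective sgn := by
  intro t
  refine ⟨SemidirectProduct.inl (Pi.mulSingle 0 t), ?_⟩
  show ∏ i, Pi.mulSingle (0 : Fin 6) t i = t
  rw [Finset.prod_pi_mulSingle']
  simp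

def wEquiv : W ≃ Nn × Equiv.Perm (Fin 6) where
  toFun w := (w.left, w.right)
  invFun p := ⟨p.1, p.2⟩
  left_inv w := by cases w; rfl
  right_inv p := rfl

lemma card_W : Nat.card W = 46080 := by
  rw [Nat.card_congr wEquiv, Nat.card_prod]
  have h1 : Nat.card Nn = 64 := by
    rw [Nat.card_eq_fintype_card]
    simp [Fintype.card_fun]
  have h2 : Nat.card (Equiv.Perm (Fin 6)) = 720 := by
    rw [Nat.card_eq_fintype_card]
    simp [Fintype.card_perm]
    rfl
  rw [h1, h2]

lemma card_G : Nat.card G = 23040 := by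
  have h := Subgroup.card_eq_card_quotient_mul_card_subgroup (G : Subgroup W)
  rw [card_W] at h
  have hq : Nat.card (W ⧸ G) = 2 := by
    rw [Nat.card_congr ((QuotientGroup.quotientKerEquivOfSurjective sgn sgn_surjective).toEquiv :
      (W ⧸ G) ≃ Multiplicative (ZMod 2))]
    rw [Nat.card_eq_fintype_card]
    rfl
  rw [hq] at h
  omega

end Card

noncomputable def permHom : Equiv.Perm (Fin 6 → ℚ) →* Equiv.Perm ↥H where
  toFun g := (eH.trans g).trans eH.symm
  map_one' := by
    apply Equiv.ext; intro p
    show (eH.trans (1 : Equiv.Perm (Fin 6 → ℚ))).trans eH.symm p = p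
    simp [Equiv.trans_apply]
  map_mul' g h := by
    apply Equiv.ext; intro p
    show (eH.trans (g * h)).trans eH.symm p =
      ((eH.trans g).trans eH.symm) (((eH.trans h).trans eH.symm) p)
    simp [Equiv.trans_apply, Equiv.Perm.mul_apply]

lemma permHom_injective : Function.Injective permHom := by
  intro g g' hgg
  apply Equiv.ext; intro y
  have h1 : (permHom g) (eH.symm y) = (permHom g') (eH.symm y) := by rw [hgg]
  have h2 : eH.symm (g (eH (eH.symm y))) = eH.symm (g' (eH (eH.symm y))) := h1
  rw [Equiv.apply_symm_apply] at h2
  exact eH.symm.injective h2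

noncomputable def psi : W →* Equiv.Perm ↥H := permHom.comp Phi

lemma psi_injective : Function.Injective psi :=
  permHom_injective.comp Phi_injective

lemma permX_mapsTo (σ : Equiv.Perm (Fin 4)) : Set.MapsTo (permX σ) H H := by
  intro p hp
  show (∑ a, (p.1 ∘ σ) a) + 1 = ∑ b, p.2 b
  rw [show ∑ a, (p.1 ∘ σ) a = ∑ a, p.1 (σ a) from rfl, Equiv.sum_comp σ p.1]
  exact hp

lemma permU_mapsTo (τ : Equiv.Perm (Fin 3)) : Set.MapsTo (permU τ) H H := by
  intro p hp
  show (∑ a, p.1 a) + 1 = ∑ b, (p.2 ∘ τ) b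
  rw [show ∑ b, (p.2 ∘ τ) b = ∑ b, p.2 (τ b) from rfl, Equiv.sum_comp τ p.2]
  exact hp

lemma sears_mapsTo : Set.MapsTo sears H H := by
  intro p hp
  rw [mem_H_iff] at hp ⊢
  simp [sears]
  linarith

lemma permX_permX (σ τ : Equiv.Perm (Fin 4)) (p : V) :
    permX σ (permX τ p) = permX (τ * σ) p := rfl

lemma permU_permU (σ τ : Equiv.Perm (Fin 3)) (p : V) :
    permU σ (permU τ p) = permU (τ * σ) p := rfl

lemma permX_one (p : V) : permX 1 p = p := rfl
lemma permU_one (p : V) : permU 1 p = p := rfl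

lemma sears_sears (p : V) : sears (sears p) = p := by
  obtain ⟨x, u⟩ := p
  refine Prod.ext (funext fun i => ?_) (funext fun i => ?_) <;> fin_cases i <;>
    simp [sears] <;> ring

noncomputable def aPerm (σ : Equiv.Perm (Fin 4)) : Equiv.Perm ↥H where
  toFun p := ⟨permX σ p, permX_mapsTo σ p.2⟩
  invFun p := ⟨permX σ⁻¹ p, permX_mapsTo σ⁻¹ p.2⟩
  left_inv p := Subtype.ext (by
    show permX σ⁻¹ (permX σ (p : V)) = (p : V)
    rw [permX_permX, mul_inv_cancel, permX_one])
  right_inv p := Subtype.ext (by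
    show permX σ (permX σ⁻¹ (p : V)) = (p : V)
    rw [permX_permX, inv_mul_cancel, permX_one])

noncomputable def bPerm (τ : Equiv.Perm (Fin 3)) : Equiv.Perm ↥H where
  toFun p := ⟨permU τ p, permU_mapsTo τ p.2⟩
  invFun p := ⟨permU τ⁻¹ p, permU_mapsTo τ⁻¹ p.2⟩
  left_inv p := Subtype.ext (by
    show permU τ⁻¹ (permU τ (p : V)) = (p : V)
    rw [permU_permU, mul_inv_cancel, permU_one])
  right_inv p := Subtype.ext (by
    show permU τ (permU τ⁻¹ (p : V)) = (p : V)
    rw [permU_permU, inv_mul_cancel, permU_one])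

noncomputable def cPerm : Equiv.Perm ↥H where
  toFun p := ⟨sears p, sears_mapsTo p.2⟩
  invFun p := ⟨sears p, sears_mapsTo p.2⟩
  left_inv p := Subtype.ext (sears_sears p)
  right_inv p := Subtype.ext (sears_sears p)

lemma psi_eq (w : W) (F : V → V) (hF : Set.MapsTo F H H)
    (hcomm : ∀ p : V, p ∈ H → emap (F p) = Phi w (emap p))
    (g : Equiv.Perm ↥H) (hg : ∀ p : ↥H, (g p : V) = F p) : psi w = g := by
  apply Equiv.ext
  intro p
  apply Subtype.ext
  rw [hg]
  show zmap (Phi w (emap ↑p)) = F ↑p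
  rw [← hcomm ↑p p.2, zmap_emap (hF p.2)]

def gg : Multiplicative (ZMod 2) := Multiplicative.ofAdd 1

lemma chi_gg' : chi gg = -1 := chi_gg

lemma psi_wX01 : psi ⟨![1, gg, gg, 1, 1, 1], Equiv.swap 1 2⟩ = aPerm (Equiv.swap 0 1) := by
  apply psi_eq _ (permX (Equiv.swap 0 1)) (permX_mapsTo _) _ _ (fun p => rfl)
  intro p hp
  rw [mem_H_iff] at hp
  have hA : ∀ j : Fin 4, Equiv.swap (0:Fin 4) 1 j = ![1,0,2,3] j := by decide
  have hB : ∀ j : Fin 6, (Equiv.swap (1:Fin 6) 2)⁻¹ j = ![0,2,1,3,4,5] j := by decide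
  funext i
  rw [Phi_apply, hB]
  fin_cases i <;> simp [emap, permX, chi_gg', hA] <;> linarith

def wX01 : W := ⟨![1,gg,gg,1,1,1], Equiv.swap 1 2⟩

lemma psi_wX01' : psi wX01 = aPerm (Equiv.swap 0 1) := by
  apply psi_eq _ (permX (Equiv.swap 0 1)) (permX_mapsTo _) _ _ (fun p => rfl)
  intro p hp
  rw [mem_H_iff] at hp
  have hA : ∀ j : Fin 4, Equiv.swap (0:Fin 4) 1 j = ![1,0,2,3] j := by decide
  have hB : ∀ j : Fin 6, (Equiv.swap 1 2 : Equiv.Perm (Fin 6))⁻¹ j = ![0,2,1,3,4,5] j := by decide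
  funext i
  rw [Phi_apply]
  simp only [wX01]
  rw [hB]
  fin_cases i <;> simp [emap, permX, chi_gg', hA] <;> linarith

def wX12 : W := ⟨![1,1,1,1,1,1], Equiv.swap 0 1⟩

lemma psi_wX12' : psi wX12 = aPerm (Equiv.swap 1 2) := by
  apply psi_eq _ (permX (Equiv.swap 1 2)) (permX_mapsTo _) _ _ (fun p => rfl)
  intro p hp
  rw [mem_H_iff] at hp
  have hA : ∀ j : Fin 4, Equiv.swap (1:Fin 4) 2 j = ![0,2,1,3] j := by decide
  have hB : ∀ j : Fin 6, (Equiv.swap 0 1 : Equiv.Perm (Fin 6))⁻¹ j = ![1,0,2,3,4,5] j := by decide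
  funext i
  rw [Phi_apply]
  simp only [wX12]
  rw [hB]
  fin_cases i <;> simp [emap, permX, chi_gg', hA] <;> linarith

def wX23 : W := ⟨![1,1,1,1,1,1], Equiv.swap 1 2⟩

lemma psi_wX23' : psi wX23 = aPerm (Equiv.swap 2 3) := by
  apply psi_eq _ (permX (Equiv.swap 2 3)) (permX_mapsTo _) _ _ (fun p => rfl)
  intro p hp
  rw [mem_H_iff] at hp
  have hA : ∀ j : Fin 4, Equiv.swap (2:Fin 4) 3 j = ![0,1,3,2] j := by decide
  have hB : ∀ j : Fin 6, (Equiv.swap 1 2 : Equiv.Perm (Fin 6))⁻¹ j = ![0,2,1,3,4,5] j := by decide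
  funext i
  rw [Phi_apply]
  simp only [wX23]
  rw [hB]
  fin_cases i <;> simp [emap, permX, chi_gg', hA] <;> linarith

def wX02 : W := ⟨![gg,1,gg,1,1,1], Equiv.swap 0 2⟩

lemma psi_wX02' : psi wX02 = aPerm (Equiv.swap 0 2) := by
  apply psi_eq _ (permX (Equiv.swap 0 2)) (permX_mapsTo _) _ _ (fun p => rfl)
  intro p hp
  rw [mem_H_iff] at hp
  have hA : ∀ j : Fin 4, Equiv.swap (0:Fin 4) 2 j = ![2,1,0,3] j := by decide
  have hB : ∀ j : Fin 6, (Equiv.swap 0 2 : Equiv.Perm (Fin 6))⁻¹ j = ![2,1,0,3,4,5] j := by decide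
  funext i
  rw [Phi_apply]
  simp only [wX02]
  rw [hB]
  fin_cases i <;> simp [emap, permX, chi_gg', hA] <;> linarith

def wX03 : W := ⟨![gg,gg,1,1,1,1], Equiv.swap 0 1⟩

lemma psi_wX03' : psi wX03 = aPerm (Equiv.swap 0 3) := by
  apply psi_eq _ (permX (Equiv.swap 0 3)) (permX_mapsTo _) _ _ (fun p => rfl)
  intro p hp
  rw [mem_H_iff] at hp
  have hA : ∀ j : Fin 4, Equiv.swap (0:Fin 4) 3 j = ![3,1,2,0] j := by decide
  have hB : ∀ j : Fin 6, (Equiv.swap 0 1 : Equiv.Perm (Fin 6))⁻¹ j = ![1,0,2,3,4,5] j := by decide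
  funext i
  rw [Phi_apply]
  simp only [wX03]
  rw [hB]
  fin_cases i <;> simp [emap, permX, chi_gg', hA] <;> linarith

def wX13 : W := ⟨![1,1,1,1,1,1], Equiv.swap 0 2⟩

lemma psi_wX13' : psi wX13 = aPerm (Equiv.swap 1 3) := by
  apply psi_eq _ (permX (Equiv.swap 1 3)) (permX_mapsTo _) _ _ (fun p => rfl)
  intro p hp
  rw [mem_H_iff] at hp
  have hA : ∀ j : Fin 4, Equiv.swap (1:Fin 4) 3 j = ![0,3,2,1] j := by decide
  have hB : ∀ j : Fin 6, (Equiv.swap 0 2 : Equiv.Perm (Fin 6))⁻¹ j = ![2,1,0,3,4,5] j := by decide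
  funext i
  rw [Phi_apply]
  simp only [wX13]
  rw [hB]
  fin_cases i <;> simp [emap, permX, chi_gg', hA] <;> linarith

def wU01 : W := ⟨![1,1,1,1,1,1], Equiv.swap 4 5⟩

lemma psi_wU01' : psi wU01 = bPerm (Equiv.swap 0 1) := by
  apply psi_eq _ (permU (Equiv.swap 0 1)) (permU_mapsTo _) _ _ (fun p => rfl)
  intro p hp
  rw [mem_H_iff] at hp
  have hA : ∀ j : Fin 3, Equiv.swap (0:Fin 3) 1 j = ![1,0,2] j := by decide
  have hB : ∀ j : Fin 6, (Equiv.swap 4 5 : Equiv.Perm (Fin 6))⁻¹ j = ![0,1,2,3,5,4] j := by decide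
  funext i
  rw [Phi_apply]
  simp only [wU01]
  rw [hB]
  fin_cases i <;> simp [emap, permU, chi_gg', hA] <;> linarith

def wU12 : W := ⟨![1,1,1,gg,1,gg], Equiv.swap 3 5⟩

lemma psi_wU12' : psi wU12 = bPerm (Equiv.swap 1 2) := by
  apply psi_eq _ (permU (Equiv.swap 1 2)) (permU_mapsTo _) _ _ (fun p => rfl)
  intro p hp
  rw [mem_H_iff] at hp
  have hA : ∀ j : Fin 3, Equiv.swap (1:Fin 3) 2 j = ![0,2,1] j := by decide
  have hB : ∀ j : Fin 6, (Equiv.swap 3 5 : Equiv.Perm (Fin 6))⁻¹ j = ![0,1,2,5,4,3] j := by decide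
  funext i
  rw [Phi_apply]
  simp only [wU12]
  rw [hB]
  fin_cases i <;> simp [emap, permU, chi_gg', hA] <;> linarith

def wU02 : W := ⟨![1,1,1,gg,gg,1], Equiv.swap 3 4⟩

lemma psi_wU02' : psi wU02 = bPerm (Equiv.swap 0 2) := by
  apply psi_eq _ (permU (Equiv.swap 0 2)) (permU_mapsTo _) _ _ (fun p => rfl)
  intro p hp
  rw [mem_H_iff] at hp
  have hA : ∀ j : Fin 3, Equiv.swap (0:Fin 3) 2 j = ![2,1,0] j := by decide
  have hB : ∀ j : Fin 6, (Equiv.swap 3 4 : Equiv.Perm (Fin 6))⁻¹ j = ![0,1,2,4,3,5] j := by decide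
  funext i
  rw [Phi_apply]
  simp only [wU02]
  rw [hB]
  fin_cases i <;> simp [emap, permU, chi_gg', hA] <;> linarith

def wS : W := ⟨![1,gg,gg,1,1,1], Equiv.swap 0 3 * Equiv.swap 1 2 * Equiv.swap 4 5⟩

lemma psi_wS' : psi wS = cPerm := by
  apply psi_eq _ sears sears_mapsTo _ _ (fun p => rfl)
  intro p hp
  rw [mem_H_iff] at hp
  have hB : ∀ j : Fin 6,
      (Equiv.swap 0 3 * Equiv.swap 1 2 * Equiv.swap 4 5 : Equiv.Perm (Fin 6))⁻¹ j
        = ![3,2,1,0,5,4] j := by decide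
  funext i
  rw [Phi_apply]
  simp only [wS]
  rw [hB]
  fin_cases i <;> simp [emap, sears, chi_gg'] <;> linarith


/-! ### The closure computation -/

noncomputable def Sgen : Set (Equiv.Perm ↥H) :=
  Set.range aPerm ∪ Set.range bPerm ∪ {cPerm}

noncomputable def K : Subgroup (Equiv.Perm ↥H) := Subgroup.closure Sgen

lemma aPerm_mul (σ τ : Equiv.Perm (Fin 4)) : aPerm (σ * τ) = aPerm τ * aPerm σ :=
  Equiv.ext fun p => Subtype.ext rfl

lemma aPerm_inv (σ : Equiv.Perm (Fin 4)) : aPerm σ⁻¹ = (aPerm σ)⁻¹ :=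
  Equiv.ext fun p => Subtype.ext rfl

lemma bPerm_mul (σ τ : Equiv.Perm (Fin 3)) : bPerm (σ * τ) = bPerm τ * bPerm σ :=
  Equiv.ext fun p => Subtype.ext rfl

lemma bPerm_inv (τ : Equiv.Perm (Fin 3)) : bPerm τ⁻¹ = (bPerm τ)⁻¹ :=
  Equiv.ext fun p => Subtype.ext rfl

lemma aPerm_one : aPerm 1 = 1 := Equiv.ext fun p => Subtype.ext rfl
lemma bPerm_one : bPerm 1 = 1 := Equiv.ext fun p => Subtype.ext rfl

lemma wX01_mem : wX01 ∈ Card.G := by show ∏ i, wX01.left i = 1; decide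
lemma wX12_mem : wX12 ∈ Card.G := by show ∏ i, wX12.left i = 1; decide
lemma wX23_mem : wX23 ∈ Card.G := by show ∏ i, wX23.left i = 1; decide
lemma wX02_mem : wX02 ∈ Card.G := by show ∏ i, wX02.left i = 1; decide
lemma wX03_mem : wX03 ∈ Card.G := by show ∏ i, wX03.left i = 1; decide
lemma wX13_mem : wX13 ∈ Card.G := by show ∏ i, wX13.left i = 1; decide
lemma wU01_mem : wU01 ∈ Card.G := by show ∏ i, wU01.left i = 1; decide
lemma wU12_mem : wU12 ∈ Card.G := by show ∏ i, wU12.left i = 1; decide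
lemma wU02_mem : wU02 ∈ Card.G := by show ∏ i, wU02.left i = 1; decide
lemma wS_mem : wS ∈ Card.G := by show ∏ i, wS.left i = 1; decide

lemma a_mem_map (σ : Equiv.Perm (Fin 4)) : aPerm σ ∈ Subgroup.map psi Card.G := by
  have hσ : σ ∈ Subgroup.closure {s : Equiv.Perm (Fin 4) | s.IsSwap} := by
    rw [Equiv.Perm.closure_isSwap]; exact Subgroup.mem_top σ
  induction hσ using Subgroup.closure_induction with
  | mem x hx =>
    obtain ⟨i, j, hij, rfl⟩ := hx
    fin_cases i <;> fin_cases j <;>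
      first
        | exact absurd rfl hij
        | exact Subgroup.mem_map.mpr ⟨wX01, wX01_mem, psi_wX01'⟩
        | exact Subgroup.mem_map.mpr ⟨wX12, wX12_mem, psi_wX12'⟩
        | exact Subgroup.mem_map.mpr ⟨wX23, wX23_mem, psi_wX23'⟩
        | exact Subgroup.mem_map.mpr ⟨wX02, wX02_mem, psi_wX02'⟩
        | exact Subgroup.mem_map.mpr ⟨wX03, wX03_mem, psi_wX03'⟩
        | exact Subgroup.mem_map.mpr ⟨wX13, wX13_mem, psi_wX13'⟩
        | (rw [Equiv.swap_comm]
           first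
            | exact Subgroup.mem_map.mpr ⟨wX01, wX01_mem, psi_wX01'⟩
            | exact Subgroup.mem_map.mpr ⟨wX12, wX12_mem, psi_wX12'⟩
            | exact Subgroup.mem_map.mpr ⟨wX23, wX23_mem, psi_wX23'⟩
            | exact Subgroup.mem_map.mpr ⟨wX02, wX02_mem, psi_wX02'⟩
            | exact Subgroup.mem_map.mpr ⟨wX03, wX03_mem, psi_wX03'⟩
            | exact Subgroup.mem_map.mpr ⟨wX13, wX13_mem, psi_wX13'⟩)
  | one => rw [aPerm_one]; exact Subgroup.one_mem _
  | mul x y hx hy hx' hy' => rw [aPerm_mul]; exact Subgroup.mul_mem _ hy' hx'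
  | inv x hx hx' => rw [aPerm_inv]; exact Subgroup.inv_mem _ hx'

lemma b_mem_map (τ : Equiv.Perm (Fin 3)) : bPerm τ ∈ Subgroup.map psi Card.G := by
  have hτ : τ ∈ Subgroup.closure {s : Equiv.Perm (Fin 3) | s.IsSwap} := by
    rw [Equiv.Perm.closure_isSwap]; exact Subgroup.mem_top τ
  induction hτ using Subgroup.closure_induction with
  | mem x hx =>
    obtain ⟨i, j, hij, rfl⟩ := hx
    fin_cases i <;> fin_cases j <;>
      first
        | exact absurd rfl hij
        | exact Subgroup.mem_map.mpr ⟨wU01, wU01_mem, psi_wU01'⟩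
        | exact Subgroup.mem_map.mpr ⟨wU12, wU12_mem, psi_wU12'⟩
        | exact Subgroup.mem_map.mpr ⟨wU02, wU02_mem, psi_wU02'⟩
        | (rw [Equiv.swap_comm]
           first
            | exact Subgroup.mem_map.mpr ⟨wU01, wU01_mem, psi_wU01'⟩
            | exact Subgroup.mem_map.mpr ⟨wU12, wU12_mem, psi_wU12'⟩
            | exact Subgroup.mem_map.mpr ⟨wU02, wU02_mem, psi_wU02'⟩)
  | one => rw [bPerm_one]; exact Subgroup.one_mem _
  | mul x y hx hy hx' hy' => rw [bPerm_mul]; exact Subgroup.mul_mem _ hy' hx'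
  | inv x hx hx' => rw [bPerm_inv]; exact Subgroup.inv_mem _ hx'

lemma K_le_map : K ≤ Subgroup.map psi Card.G := by
  rw [K, Subgroup.closure_le]
  rintro g ((⟨σ, rfl⟩ | ⟨τ, rfl⟩) | rfl)
  · exact a_mem_map σ
  · exact b_mem_map τ
  · exact Subgroup.mem_map.mpr ⟨wS, wS_mem, psi_wS'⟩

/-! ### The reverse inclusion -/

def dd (i : Fin 6) : Nn := Pi.mulSingle i gg

lemma dd_apply (i k : Fin 6) : dd i k = if k = i then gg else 1 := by
  rw [dd, Pi.mulSingle_apply]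

lemma dd_prod (i : Fin 6) : ∏ k, dd i k = gg := by
  rw [dd, Finset.prod_pi_mulSingle']
  simp

noncomputable def C : Subgroup W := (Subgroup.comap psi K) ⊓ Card.G

lemma conj_inl (w : W) (δ : Nn) :
    w * SemidirectProduct.inl δ * w⁻¹ = SemidirectProduct.inl (δ ∘ w.right.symm) := by
  apply SemidirectProduct.ext
  · show (w * SemidirectProduct.inl δ * w⁻¹).left = δ ∘ w.right.symm
    rw [SemidirectProduct.mul_left, SemidirectProduct.mul_left, SemidirectProduct.inv_left,
      SemidirectProduct.mul_right, SemidirectProduct.left_inl, SemidirectProduct.right_inl,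
      mul_one]
    rw [show (phi w.right) ((phi w.right⁻¹) w.left⁻¹) = w.left⁻¹ from by
      rw [map_inv phi]; exact MulEquiv.apply_symm_apply _ _]
    rw [mul_comm w.left _, mul_assoc, mul_inv_cancel, mul_one]
    rfl
  · show (w * SemidirectProduct.inl δ * w⁻¹).right
      = (SemidirectProduct.inl (δ ∘ w.right.symm) : W).right
    rw [SemidirectProduct.mul_right, SemidirectProduct.mul_right, SemidirectProduct.right_inl,
      SemidirectProduct.inv_right, mul_one, mul_inv_cancel, SemidirectProduct.right_inl]

noncomputable def P : Subgroup (Equiv.Perm (Fin 6)) := Subgroup.map SemidirectProduct.rightHom C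

lemma exists_tau (i j : Fin 6) (hij : i ≠ j) :
    ∃ τ : Equiv.Perm (Fin 6), τ 1 = i ∧ τ 2 = j := by
  have h1j' : (1 : Fin 6) ≠ Equiv.swap 1 i j := by
    intro h
    apply hij
    have h2 := congrArg (Equiv.swap 1 i) h
    rw [Equiv.swap_apply_left, Equiv.swap_apply_self] at h2
    exact h2
  refine ⟨Equiv.swap 1 i * Equiv.swap 2 (Equiv.swap 1 i j), ?_, ?_⟩
  · show Equiv.swap 1 i (Equiv.swap 2 (Equiv.swap 1 i j) 1) = i
    rw [Equiv.swap_apply_of_ne_of_ne (by decide) h1j', Equiv.swap_apply_left]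
  · show Equiv.swap 1 i (Equiv.swap 2 (Equiv.swap 1 i j) 2) = j
    rw [Equiv.swap_apply_left, Equiv.swap_apply_self]

section Cmem

variable (hX01 : wX01 ∈ C) (hX12 : wX12 ∈ C) (hX23 : wX23 ∈ C) (hX02 : wX02 ∈ C)
  (hX03 : wX03 ∈ C) (hX13 : wX13 ∈ C) (hU01 : wU01 ∈ C) (hU12 : wU12 ∈ C)
  (hU02 : wU02 ∈ C) (hS : wS ∈ C)

include hX01 hX12 hX23 hX02 hX03 hX13 hU01 hU12 hU02 hS

lemma P_top : ∀ τ : Equiv.Perm (Fin 6), τ ∈ P := by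
  have hk01 : (Equiv.swap 0 1 : Equiv.Perm (Fin 6)) ∈ P := ⟨wX12, hX12, rfl⟩
  have hk12 : (Equiv.swap 1 2 : Equiv.Perm (Fin 6)) ∈ P := ⟨wX23, hX23, rfl⟩
  have hk02 : (Equiv.swap 0 2 : Equiv.Perm (Fin 6)) ∈ P := ⟨wX13, hX13, rfl⟩
  have hk45 : (Equiv.swap 4 5 : Equiv.Perm (Fin 6)) ∈ P := ⟨wU01, hU01, rfl⟩
  have hk35 : (Equiv.swap 3 5 : Equiv.Perm (Fin 6)) ∈ P := ⟨wU12, hU12, rfl⟩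
  have hk34 : (Equiv.swap 3 4 : Equiv.Perm (Fin 6)) ∈ P := ⟨wU02, hU02, rfl⟩
  have hks : (Equiv.swap 0 3 * Equiv.swap 1 2 * Equiv.swap 4 5 : Equiv.Perm (Fin 6)) ∈ P :=
    ⟨wS, hS, rfl⟩
  have h03 : (Equiv.swap 0 3 : Equiv.Perm (Fin 6)) ∈ P := by
    rw [show (Equiv.swap 0 3 : Equiv.Perm (Fin 6)) = Equiv.swap 1 2 * Equiv.swap 4 5 * (Equiv.swap 0 3 * Equiv.swap 1 2 * Equiv.swap 4 5) from by decide]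
    exact mul_mem (mul_mem (hk12) hk45) hks
  have h04 : (Equiv.swap 0 4 : Equiv.Perm (Fin 6)) ∈ P := by
    rw [show (Equiv.swap 0 4 : Equiv.Perm (Fin 6)) = (Equiv.swap 0 3 * Equiv.swap 1 2 * Equiv.swap 4 5) * Equiv.swap 3 5 * (Equiv.swap 0 3 * Equiv.swap 1 2 * Equiv.swap 4 5) from by decide]
    exact mul_mem (mul_mem (hks) hk35) hks
  have h05 : (Equiv.swap 0 5 : Equiv.Perm (Fin 6)) ∈ P := by
    rw [show (Equiv.swap 0 5 : Equiv.Perm (Fin 6)) = (Equiv.swap 0 3 * Equiv.swap 1 2 * Equiv.swap 4 5) * Equiv.swap 3 4 * (Equiv.swap 0 3 * Equiv.swap 1 2 * Equiv.swap 4 5) from by decide]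
    exact mul_mem (mul_mem (hks) hk34) hks
  have h13 : (Equiv.swap 1 3 : Equiv.Perm (Fin 6)) ∈ P := by
    rw [show (Equiv.swap 1 3 : Equiv.Perm (Fin 6)) = (Equiv.swap 0 3 * Equiv.swap 1 2 * Equiv.swap 4 5) * Equiv.swap 0 2 * (Equiv.swap 0 3 * Equiv.swap 1 2 * Equiv.swap 4 5) from by decide]
    exact mul_mem (mul_mem (hks) hk02) hks
  have h14 : (Equiv.swap 1 4 : Equiv.Perm (Fin 6)) ∈ P := by
    rw [show (Equiv.swap 1 4 : Equiv.Perm (Fin 6)) = Equiv.swap 0 1 * (Equiv.swap 0 3 * Equiv.swap 1 2 * Equiv.swap 4 5) * Equiv.swap 3 5 * (Equiv.swap 0 3 * Equiv.swap 1 2 * Equiv.swap 4 5) * Equiv.swap 0 1 from by decide]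
    exact mul_mem (mul_mem (mul_mem (mul_mem (hk01) hks) hk35) hks) hk01
  have h15 : (Equiv.swap 1 5 : Equiv.Perm (Fin 6)) ∈ P := by
    rw [show (Equiv.swap 1 5 : Equiv.Perm (Fin 6)) = Equiv.swap 0 1 * (Equiv.swap 0 3 * Equiv.swap 1 2 * Equiv.swap 4 5) * Equiv.swap 3 4 * (Equiv.swap 0 3 * Equiv.swap 1 2 * Equiv.swap 4 5) * Equiv.swap 0 1 from by decide]
    exact mul_mem (mul_mem (mul_mem (mul_mem (hk01) hks) hk34) hks) hk01
  have h23 : (Equiv.swap 2 3 : Equiv.Perm (Fin 6)) ∈ P := by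
    rw [show (Equiv.swap 2 3 : Equiv.Perm (Fin 6)) = (Equiv.swap 0 3 * Equiv.swap 1 2 * Equiv.swap 4 5) * Equiv.swap 0 1 * (Equiv.swap 0 3 * Equiv.swap 1 2 * Equiv.swap 4 5) from by decide]
    exact mul_mem (mul_mem (hks) hk01) hks
  have h24 : (Equiv.swap 2 4 : Equiv.Perm (Fin 6)) ∈ P := by
    rw [show (Equiv.swap 2 4 : Equiv.Perm (Fin 6)) = Equiv.swap 0 2 * (Equiv.swap 0 3 * Equiv.swap 1 2 * Equiv.swap 4 5) * Equiv.swap 3 5 * (Equiv.swap 0 3 * Equiv.swap 1 2 * Equiv.swap 4 5) * Equiv.swap 0 2 from by decide]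
    exact mul_mem (mul_mem (mul_mem (mul_mem (hk02) hks) hk35) hks) hk02
  have h25 : (Equiv.swap 2 5 : Equiv.Perm (Fin 6)) ∈ P := by
    rw [show (Equiv.swap 2 5 : Equiv.Perm (Fin 6)) = Equiv.swap 0 2 * (Equiv.swap 0 3 * Equiv.swap 1 2 * Equiv.swap 4 5) * Equiv.swap 3 4 * (Equiv.swap 0 3 * Equiv.swap 1 2 * Equiv.swap 4 5) * Equiv.swap 0 2 from by decide]
    exact mul_mem (mul_mem (mul_mem (mul_mem (hk02) hks) hk34) hks) hk02
  intro τ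
  have hτ : τ ∈ Subgroup.closure {s : Equiv.Perm (Fin 6) | s.IsSwap} := by
    rw [Equiv.Perm.closure_isSwap]; exact Subgroup.mem_top τ
  induction hτ using Subgroup.closure_induction with
  | mem x hx =>
    obtain ⟨i, j, hij, rfl⟩ := hx
    fin_cases i <;> fin_cases j <;>
      first
        | exact absurd rfl hij
        | exact hk01 | exact hk12 | exact hk02 | exact hk45 | exact hk35 | exact hk34
        | exact h03 | exact h04 | exact h05 | exact h13 | exact h14 | exact h15
        | exact h23 | exact h24 | exact h25
        | (rw [Equiv.swap_comm]
           first
            | exact hk01 | exact hk12 | exact hk02 | exact hk45 | exact hk35 | exact hk34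
            | exact h03 | exact h04 | exact h05 | exact h13 | exact h14 | exact h15
            | exact h23 | exact h24 | exact h25)
  | one => exact Subgroup.one_mem _
  | mul x y hx hy hx' hy' => exact Subgroup.mul_mem _ hx' hy'
  | inv x hx hx' => exact Subgroup.inv_mem _ hx'

lemma d12_mem : SemidirectProduct.inl (dd 1 * dd 2) ∈ C := by
  have heq : wX01 * wX23 = SemidirectProduct.inl (dd 1 * dd 2) := by
    apply SemidirectProduct.ext
    · show wX01.left * (phi wX01.right) wX23.left = (SemidirectProduct.inl (dd 1 * dd 2) : W).left
      rw [SemidirectProduct.left_inl, show wX01.left = (![1, gg, gg, 1, 1, 1] : Nn) from rfl,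
        show wX23.left = (1 : Nn) from funext fun k => by fin_cases k <;> rfl, map_one, mul_one]
      funext k
      fin_cases k <;> simp [dd_apply] <;> rfl
    · show wX01.right * wX23.right = (SemidirectProduct.inl (dd 1 * dd 2) : W).right
      rw [SemidirectProduct.right_inl]
      show Equiv.swap 1 2 * Equiv.swap 1 2 = 1
      rw [Equiv.swap_mul_self]
  rw [← heq]
  exact mul_mem hX01 hX23

lemma pair_mem (i j : Fin 6) (hij : i ≠ j) :
    SemidirectProduct.inl (dd i * dd j) ∈ C := by
  obtain ⟨τ, hτ1, hτ2⟩ := exists_tau i j hij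
  obtain ⟨w, hwC, hwr⟩ := P_top hX01 hX12 hX23 hX02 hX03 hX13 hU01 hU12 hU02 hS τ
  have hconj := conj_inl w (dd 1 * dd 2)
  have hmem : w * SemidirectProduct.inl (dd 1 * dd 2) * w⁻¹
      ∈ C := mul_mem (mul_mem hwC (d12_mem hX01 hX12 hX23 hX02 hX03 hX13 hU01 hU12 hU02 hS))
        (inv_mem hwC)
  rw [hconj] at hmem
  have hre : w.right = τ := hwr
  have heq : (dd 1 * dd 2) ∘ w.right.symm
      = dd i * dd j := by
    rw [hre]
    funext k
    show dd 1 (τ.symm k) * dd 2 (τ.symm k)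
      = dd i k * dd j k
    rw [dd_apply, dd_apply, dd_apply, dd_apply]
    congr 1
    · congr 1
      rw [eq_iff_iff]
      rw [Equiv.symm_apply_eq, hτ1]
    · congr 1
      rw [eq_iff_iff]
      rw [Equiv.symm_apply_eq, hτ2]
  rw [heq] at hmem
  exact hmem

lemma even_mem : ∀ (n : ℕ) (ε : Nn),
    (Finset.univ.filter (fun i => ε i ≠ 1)).card ≤ n → (∏ i, ε i) = 1 →
    SemidirectProduct.inl ε ∈ C := by
  intro n
  induction n with
  | zero =>
    intro ε hcard hprod
    have hε : ε = 1 := by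
      funext k
      by_contra hk
      have : k ∈ Finset.univ.filter (fun i => ε i ≠ 1) := by
        simp only [Finset.mem_filter, Finset.mem_univ, true_and]; exact hk
      have := Finset.card_pos.mpr ⟨k, this⟩
      omega
    rw [hε, map_one]
    exact Subgroup.one_mem _
  | succ n ih =>
    intro ε hcard hprod
    by_cases hε : ε = 1
    · rw [hε, map_one]; exact Subgroup.one_mem _
    · have hex : ∃ i, ε i ≠ 1 := by
        by_contra hno
        push_neg at hno
        exact hε (funext hno)
      obtain ⟨i, hi⟩ := hex
      have hex2 : ∃ j, j ≠ i ∧ ε j ≠ 1 := by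
        by_contra hno
        push_neg at hno
        have : ∏ k, ε k = ε i := Finset.prod_eq_single i
          (fun j _ hj => hno j hj) (fun h => absurd (Finset.mem_univ i) h)
        rw [hprod] at this
        exact hi this.symm
      obtain ⟨j, hji, hj⟩ := hex2
      have htwo : ∀ z : Multiplicative (ZMod 2), z ≠ 1 → z = gg := by decide
      have hz : ∀ z : Multiplicative (ZMod 2), z * z = 1 := by decide
      set ε' : Nn := ε * dd i * dd j with hε'def
      have hval : ∀ k, k ≠ i → k ≠ j → ε' k = ε k := by
        intro k hki hkj
        show ε k * dd i k * dd j k = ε k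
        rw [dd_apply, dd_apply, if_neg hki, if_neg hkj, mul_one, mul_one]
      have hvi : ε' i = 1 := by
        show ε i * dd i i * dd j i = 1
        rw [dd_apply, dd_apply, if_pos rfl, if_neg (Ne.symm hji),
          mul_one, htwo _ hi, hz]
      have hvj : ε' j = 1 := by
        show ε j * dd i j * dd j j = 1
        rw [dd_apply, dd_apply, if_neg hji, if_pos rfl,
          mul_one, htwo _ hj, hz]
      have hprod' : ∏ k, ε' k = 1 := by
        have : ∏ k, ε' k = (∏ k, ε k) * (∏ k, dd i k) *
            (∏ k, dd j k) := by
          rw [← Finset.prod_mul_distrib, ← Finset.prod_mul_distrib]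
          rfl
        rw [this, hprod, dd_prod, dd_prod, one_mul, hz]
      have hsub : Finset.univ.filter (fun k => ε' k ≠ 1) ⊆
          (Finset.univ.filter (fun k => ε k ≠ 1)).erase i := by
        intro k hk
        simp only [Finset.mem_filter, Finset.mem_univ, true_and] at hk
        rw [Finset.mem_erase]
        constructor
        · rintro rfl; exact hk hvi
        · simp only [Finset.mem_filter, Finset.mem_univ, true_and]
          intro hεk
          by_cases hki : k = i
          · subst hki; exact hk hvi
          · by_cases hkj : k = j
            · subst hkj; exact hk hvj
            · rw [hval k hki hkj] at hk; exact hk hεk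
      have hcard' : (Finset.univ.filter (fun k => ε' k ≠ 1)).card ≤ n := by
        have h1 := Finset.card_le_card hsub
        have h2 : i ∈ Finset.univ.filter (fun k => ε k ≠ 1) := by
          simp only [Finset.mem_filter, Finset.mem_univ, true_and]; exact hi
        rw [Finset.card_erase_of_mem h2] at h1
        omega
      have hC' := ih ε' hcard' hprod'
      have hCp := pair_mem hX01 hX12 hX23 hX02 hX03 hX13 hU01 hU12 hU02 hS i j
        (fun h => hji h.symm)
      have heq : ε = (dd i * dd j) * ε' := by
        funext k
        show ε k = (dd i k * dd j k) *
          (ε k * dd i k * dd j k)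
        have : ∀ a b c : Multiplicative (ZMod 2), (a * b) * (c * a * b) = c := by decide
        rw [this]
      rw [heq, map_mul]
      exact mul_mem hCp hC'

end Cmem

lemma map_le_K : Subgroup.map psi Card.G ≤ K := by
  have hX01 : wX01 ∈ C := ⟨by
    show psi wX01 ∈ K
    rw [psi_wX01']
    exact Subgroup.subset_closure (Or.inl (Or.inl ⟨_, rfl⟩)), wX01_mem⟩
  have hX12 : wX12 ∈ C := ⟨by
    show psi wX12 ∈ K
    rw [psi_wX12']
    exact Subgroup.subset_closure (Or.inl (Or.inl ⟨_, rfl⟩)), wX12_mem⟩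
  have hX23 : wX23 ∈ C := ⟨by
    show psi wX23 ∈ K
    rw [psi_wX23']
    exact Subgroup.subset_closure (Or.inl (Or.inl ⟨_, rfl⟩)), wX23_mem⟩
  have hX02 : wX02 ∈ C := ⟨by
    show psi wX02 ∈ K
    rw [psi_wX02']
    exact Subgroup.subset_closure (Or.inl (Or.inl ⟨_, rfl⟩)), wX02_mem⟩
  have hX03 : wX03 ∈ C := ⟨by
    show psi wX03 ∈ K
    rw [psi_wX03']
    exact Subgroup.subset_closure (Or.inl (Or.inl ⟨_, rfl⟩)), wX03_mem⟩
  have hX13 : wX13 ∈ C := ⟨by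
    show psi wX13 ∈ K
    rw [psi_wX13']
    exact Subgroup.subset_closure (Or.inl (Or.inl ⟨_, rfl⟩)), wX13_mem⟩
  have hU01 : wU01 ∈ C := ⟨by
    show psi wU01 ∈ K
    rw [psi_wU01']
    exact Subgroup.subset_closure (Or.inl (Or.inr ⟨_, rfl⟩)), wU01_mem⟩
  have hU12 : wU12 ∈ C := ⟨by
    show psi wU12 ∈ K
    rw [psi_wU12']
    exact Subgroup.subset_closure (Or.inl (Or.inr ⟨_, rfl⟩)), wU12_mem⟩
  have hU02 : wU02 ∈ C := ⟨by
    show psi wU02 ∈ K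
    rw [psi_wU02']
    exact Subgroup.subset_closure (Or.inl (Or.inr ⟨_, rfl⟩)), wU02_mem⟩
  have hS : wS ∈ C := ⟨by
    show psi wS ∈ K
    rw [psi_wS']
    exact Subgroup.subset_closure (Or.inr rfl), wS_mem⟩
  rintro g ⟨w, hwG, rfl⟩
  obtain ⟨w', hw'C, hw'r⟩ := P_top hX01 hX12 hX23 hX02 hX03 hX13 hU01 hU12 hU02 hS
    (SemidirectProduct.rightHom w)
  have hη : SemidirectProduct.inl (w.left * w'.left⁻¹) ∈ C := by
    apply even_mem hX01 hX12 hX23 hX02 hX03 hX13 hU01 hU12 hU02 hS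
      (Finset.univ.filter _).card _ le_rfl
    have h1 : ∏ i, w.left i = 1 := hwG
    have h2 : ∏ i, w'.left i = 1 := hw'C.2
    calc ∏ i, (w.left * w'.left⁻¹) i = (∏ i, w.left i) * (∏ i, w'.left⁻¹ i) :=
          Finset.prod_mul_distrib
      _ = (∏ i, w.left i) * (∏ i, w'.left i)⁻¹ := by
          rw [← Finset.prod_inv_distrib]; rfl
      _ = 1 := by rw [h1, h2]; simp
  have hw_eq : w = SemidirectProduct.inl (w.left * w'.left⁻¹) * w' := by
    apply SemidirectProduct.ext
    · show w.left = (SemidirectProduct.inl (w.left * w'.left⁻¹) * w').left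
      rw [SemidirectProduct.mul_left, SemidirectProduct.left_inl, SemidirectProduct.right_inl,
        map_one]
      show w.left = w.left * w'.left⁻¹ * ((1 : MulAut Nn) w'.left)
      rw [MulAut.one_apply, mul_assoc, inv_mul_cancel, mul_one]
    · show w.right = (SemidirectProduct.inl (w.left * w'.left⁻¹) * w').right
      rw [SemidirectProduct.mul_right, SemidirectProduct.right_inl, one_mul]
      exact hw'r.symm
  rw [hw_eq, map_mul]
  exact mul_mem hη.1 hw'C.1

lemma K_eq : K = Subgroup.map psi Card.G := le_antisymm K_le_map map_le_K

lemma card_K : Nat.card K = 23040 := by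
  rw [K_eq]
  rw [← Nat.card_congr (Subgroup.equivMapOfInjective Card.G psi psi_injective).toEquiv]
  exact Card.card_G

/-! ### Main statement -/

lemma bijOn_permX (σ : Equiv.Perm (Fin 4)) : Set.BijOn (permX σ) H H := by
  apply Set.InvOn.bijOn (f' := permX σ⁻¹) ⟨?_, ?_⟩ (permX_mapsTo σ) (permX_mapsTo σ⁻¹)
  · intro p _
    rw [permX_permX, mul_inv_cancel, permX_one]
  · intro p _
    rw [permX_permX, inv_mul_cancel, permX_one]

lemma bijOn_permU (τ : Equiv.Perm (Fin 3)) : Set.BijOn (permU τ) H H := by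
  apply Set.InvOn.bijOn (f' := permU τ⁻¹) ⟨?_, ?_⟩ (permU_mapsTo τ) (permU_mapsTo τ⁻¹)
  · intro p _
    rw [permU_permU, mul_inv_cancel, permU_one]
  · intro p _
    rw [permU_permU, inv_mul_cancel, permU_one]

lemma bijOn_sears : Set.BijOn sears H H := by
  apply Set.InvOn.bijOn (f' := sears) ⟨?_, ?_⟩ sears_mapsTo sears_mapsTo
  · intro p _; exact sears_sears p
  · intro p _; exact sears_sears p


/-- the coordinate permutations and Sears' involution map `H` bijectively
onto `H`, and the subgroup of the group of bijections of `H` generated by their restrictions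
to `H` is finite of order 23040. -/
theorem stmt14 :
    (∀ σ : Equiv.Perm (Fin 4), Set.BijOn (permX σ) H H) ∧
    (∀ τ : Equiv.Perm (Fin 3), Set.BijOn (permU τ) H H) ∧
    Set.BijOn sears H H ∧
    ∃ (a : Equiv.Perm (Fin 4) → Equiv.Perm ↥H) (b : Equiv.Perm (Fin 3) → Equiv.Perm ↥H)
      (c : Equiv.Perm ↥H),
      (∀ σ (p : ↥H), ((a σ p : ↥H) : V) = permX σ (p : V)) ∧
      (∀ τ (p : ↥H), ((b τ p : ↥H) : V) = permU τ (p : V)) ∧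
      (∀ p : ↥H, ((c p : ↥H) : V) = sears (p : V)) ∧
      Nat.card
        (Subgroup.closure (Set.range a ∪ Set.range b ∪ {c}) : Subgroup (Equiv.Perm ↥H)) =
        23040 := by
  refine ⟨bijOn_permX, bijOn_permU, bijOn_sears, aPerm, bPerm, cPerm,
    fun σ p => rfl, fun τ p => rfl, fun p => rfl, ?_⟩
  exact card_K

end Stmt14
end

section
/- Assume (r1,r2,r3,r4,i,j,N) is admissible with i + j ≥ r1 + r3 and i + j ≥ r2 + r4 (so m_min = 0), and let c ≥ 0 be an integer. Then Σ_{m=0}^{m_max} (−1)^{ρ−m} [ρ+N−1−m]! · ( [c+m]! / [c+N−2+m]! ) / ( [m]! · [(r3+r4−i)/2 − m]! · [(r1+r2−i)/2 − m]! · [(r2+r3−j)/2 − m]! · [(r1+r4−j)/2 − m]! · [(i+j−r2−r4)/2 + m]! · [(i+j−r1−r3)/2 + m]! ) = (−1)^ρ · ( [ρ+N−1]! · [c]! / [c+N−2]! ) / ( [(r3+r4−i)/2]! · [(r1+r2−i)/2]! · [(r2+r3−j)/2]! · [(r1+r4−j)/2]! · [(i+j−r2−r4)/2]! · [(i+j−r1−r3)/2]!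 ) · Σ_{n=0}^{m_max} qⁿ · (q^{c+1};q)_n (q^{a1};q)_n (q^{a2};q)_n (q^{a3};q)_n (q^{a4};q)_n / ( (q;q)_n (q^{c+N−1};q)_n (q^{b1};q)_n (q^{b2};q)_n (q^{b3};q)_n ), where a1 = (i−r1−r2)/2, a2 = (i−r3−r4)/2, a3 = (j−r1−r4)/2, a4 = (j−r2−r3)/2, b1 = −ρ−(N−1), b2 = (i+j−r2−r4)/2 + 1, b3 = (i+j−r1−r3)/2 + 1. This is the terminating ₅Φ₄ representation (Statement 2 of the paper, type I form) of the original multiplicity-free 6-j sum, where c plays the role of k − m_max. -/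
open Finset

/-- The quantum integer `[n] = (tⁿ − t⁻ⁿ)/(t − t⁻¹)`. -/
noncomputable def qint (t : ℝ) (n : ℤ) : ℝ := (t ^ n - t ^ (-n)) / (t - t⁻¹)

/-- The quantum factorial `[n]! = [1][2]⋯[n]`, with `[0]! = 1`
(and value `1` for negative arguments, which never occur below). -/
noncomputable def qfact (t : ℝ) (n : ℤ) : ℝ :=
  ∏ k ∈ Finset.range n.toNat, qint t ((k : ℤ) + 1)

/-- The q-Pochhammer symbol `(x; q)_n = ∏_{s=0}^{n−1} (1 − x qˢ)`. -/
noncomputable def qpoch (x q : ℝ) (n : ℕ) : ℝ :=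
  ∏ s ∈ Finset.range n, (1 - x * q ^ s)

/-- Admissibility of the tuple `(r₁,r₂,r₃,r₄,i,j,N)`. -/
def Admissible (r₁ r₂ r₃ r₄ i j N : ℤ) : Prop :=
  0 ≤ r₁ ∧ 0 ≤ r₂ ∧ 0 ≤ r₃ ∧ 0 ≤ r₄ ∧ 0 ≤ i ∧ 0 ≤ j ∧ 2 ≤ N ∧
  2 ∣ (r₁ + r₂ + i) ∧ 2 ∣ (r₃ + r₄ + i) ∧ 2 ∣ (r₁ + r₄ + j) ∧ 2 ∣ (r₂ + r₃ + j) ∧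
  max |r₁ - r₂| |r₃ - r₄| ≤ i ∧ i ≤ min (r₁ + r₂) (r₃ + r₄) ∧
  max |r₂ - r₃| |r₁ - r₄| ≤ j ∧ j ≤ min (r₂ + r₃) (r₁ + r₄)

/-- `ρ = (r₁+r₂+r₃+r₄)/2`. -/
def rho (r₁ r₂ r₃ r₄ : ℤ) : ℤ := (r₁ + r₂ + r₃ + r₄) / 2

/-- `m_max = (1/2)·min(r₁+r₂−i, r₃+r₄−i, r₁+r₄−j, r₂+r₃−j)`. -/
def mMax (r₁ r₂ r₃ r₄ i j : ℤ) : ℤ :=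
  (min (min (r₁ + r₂ - i) (r₃ + r₄ - i)) (min (r₁ + r₄ - j) (r₂ + r₃ - j))) / 2

/-- `m_min = (1/2)·max(0, r₁+r₃−i−j, r₂+r₄−i−j)`. -/
def mMin (r₁ r₂ r₃ r₄ i j : ℤ) : ℤ :=
  (max 0 (max (r₁ + r₃ - i - j) (r₂ + r₄ - i - j))) / 2

/-- `θ_N(a,b,c)`. -/
noncomputable def theta (t : ℝ) (N a b c : ℤ) : ℝ :=
  Real.sqrt (qfact t ((a + b - c) / 2) * qfact t ((a - b + c) / 2) *
    qfact t ((-a + b + c) / 2) / qfact t ((a + b + c) / 2 + N - 1))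

/-- `K′ = θ_N(r₁,r₂,i)·θ_N(r₃,r₄,i)·θ_N(r₁,r₄,j)·θ_N(r₂,r₃,j)·[N−1]!·[N−2]!`. -/
noncomputable def Kprime (t : ℝ) (N r₁ r₂ r₃ r₄ i j : ℤ) : ℝ :=
  theta t N r₁ r₂ i * theta t N r₃ r₄ i * theta t N r₁ r₄ j * theta t N r₂ r₃ j *
    qfact t (N - 1) * qfact t (N - 2)

/-- The multiplicity-free 6-j expression `F_T^N(r₁,r₂,i; r₃,r₄,j)` of type `T ∈ {1,2}`. -/
noncomputable def F (t : ℝ) (T : ℕ) (N r₁ r₂ i r₃ r₄ j : ℤ) : ℝ :=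
  Kprime t N r₁ r₂ r₃ r₄ i j *
    ∑ m ∈ Finset.Icc (mMin r₁ r₂ r₃ r₄ i j) (mMax r₁ r₂ r₃ r₄ i j),
      (-1 : ℝ) ^ (rho r₁ r₂ r₃ r₄ - m) * qfact t (rho r₁ r₂ r₃ r₄ + N - 1 - m) /
        (qfact t m * qfact t ((r₃ + r₄ - i) / 2 - m) * qfact t ((r₂ + r₃ - j) / 2 - m) *
          qfact t ((r₁ + r₄ - j) / 2 - m) * qfact t ((i + j - r₂ - r₄) / 2 + m) *
          qfact t ((r₁ + r₂ - i) / 2 + (N - 2) * (if T = 2 then 1 else 0) - m) *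
          qfact t ((i + j - r₁ - r₃) / 2 + (N - 2) * (if T = 1 then 1 else 0) + m))

/-- The prefactor `K_T` (for the case `m_min = 0`). -/
noncomputable def Kfac (t : ℝ) (T : ℕ) (N r₁ r₂ i r₃ r₄ j : ℤ) : ℝ :=
  Kprime t N r₁ r₂ r₃ r₄ i j * qfact t (rho r₁ r₂ r₃ r₄ + N - 1) /
    (qfact t ((r₃ + r₄ - i) / 2) *
      qfact t ((r₁ + r₂ - i) / 2 + (N - 2) * (if T = 2 then 1 else 0)) *
      qfact t ((r₂ + r₃ - j) / 2) * qfact t ((r₁ + r₄ - j) / 2) *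
      qfact t ((i + j - r₂ - r₄) / 2) *
      qfact t ((i + j - r₁ - r₃) / 2 + (N - 2) * (if T = 1 then 1 else 0)))

section QHelpers
variable {t : ℝ}


lemma qpoch_succ (x q : ℝ) (n : ℕ) : qpoch x q (n+1) = qpoch x q n * (1 - x * q ^ n) := by
  simp [qpoch, Finset.prod_range_succ]

lemma qpoch_zero (x q : ℝ) : qpoch x q 0 = 1 := by simp [qpoch]

lemma qsq_ne_one (ht : 0 < t) (ht1 : t ≠ 1) : t ^ 2 ≠ 1 := by
  intro h
  have : t = 1 := by nlinarith
  exact ht1 this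

lemma zpow_ne_one' (ht : 0 < t) (ht1 : t ≠ 1) {k : ℤ} (hk : k ≠ 0) : (t ^ 2) ^ k ≠ 1 := by
  intro h
  have hq0 : (0:ℝ) < t ^ 2 := by positivity
  have hq1 : t ^ 2 ≠ 1 := qsq_ne_one ht ht1
  have := zpow_right_injective₀ hq0 hq1 (h.trans (zpow_zero (t^2)).symm)
  exact hk this

lemma one_sub_q_ne (ht : 0 < t) (ht1 : t ≠ 1) {k : ℤ} (hk : k ≠ 0) : 1 - (t ^ 2) ^ k ≠ 0 := by
  have := zpow_ne_one' ht ht1 hk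
  intro h; apply this; linarith [sub_eq_zero.mp h]

lemma tden_ne (ht : 0 < t) (ht1 : t ≠ 1) : t - t⁻¹ ≠ 0 := by
  have ht0 : t ≠ 0 := ne_of_gt ht
  have h2 : t ^ 2 - 1 ≠ 0 := sub_ne_zero.mpr (qsq_ne_one ht ht1)
  intro h
  apply h2
  have : t * (t - t⁻¹) = t ^ 2 - 1 := by field_simp
  rw [← this, h, mul_zero]

lemma qint_formula (ht : 0 < t) (ht1 : t ≠ 1) (k : ℤ) :
    qint t k * (t ^ 2 - 1) = t ^ (1 - k) * ((t ^ 2) ^ k - 1) := by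
  have ht0 : t ≠ 0 := ne_of_gt ht
  have hXne : t ^ k ≠ 0 := zpow_ne_zero _ ht0
  have e2k : (t^2)^k = t^k * t^k := by
    rw [← zpow_natCast t 2, ← zpow_mul]
    rw [show (2:ℕ) * k = k + k by push_cast; ring, zpow_add₀ ht0]
  have h1k : t ^ (1-k) = t / t^k := by rw [zpow_sub₀ ht0, zpow_one]
  have hnk : t ^ (-k) = (t^k)⁻¹ := by rw [zpow_neg]
  rw [qint, e2k, h1k, hnk, div_mul_eq_mul_div, div_eq_iff (tden_ne ht ht1)]
  field_simp

-- two orientations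
lemma bracket1 (ht : 0 < t) (ht1 : t ≠ 1) (k : ℤ) :
    qint t k * (t ^ 2 - 1) = -(t ^ (1 - k) * (1 - (t ^ 2) ^ k)) := by
  rw [qint_formula ht ht1]; ring

lemma bracket2 (ht : 0 < t) (ht1 : t ≠ 1) (k : ℤ) :
    qint t k * (t ^ 2 - 1) = t ^ (1 + k) * (1 - (t ^ 2) ^ (-k)) := by
  have ht0 : t ≠ 0 := ne_of_gt ht
  rw [qint_formula ht ht1]
  have hq0 : t ^ 2 ≠ 0 := by positivity
  have : (t^2)^k - 1 = (t^2)^k * (1 - (t^2)^(-k)) := by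
    rw [mul_sub, ← zpow_add₀ hq0]; simp
  have e2k : (t^2)^k = t^k * t^k := by
    rw [← zpow_natCast t 2, ← zpow_mul]
    rw [show (2:ℕ) * k = k + k by push_cast; ring, zpow_add₀ ht0]
  rw [this, ← mul_assoc, e2k]
  congr 1
  rw [show t^(1-k)*(t^k*t^k) = t^(1-k)*t^k*t^k by ring, ← zpow_add₀ ht0, ← zpow_add₀ ht0]
  congr 1
  ring

lemma qint_pos (ht : 0 < t) (ht1 : t ≠ 1) {k : ℤ} (hk : 1 ≤ k) : 0 < qint t k := by
  have ht0 : t ≠ 0 := ne_of_gt ht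
  have hq0 : (0:ℝ) < t ^ 2 := by positivity
  have hq0' : (0:ℝ) ≤ t^2 := hq0.le
  have h2 : t ^ 2 - 1 ≠ 0 := sub_ne_zero.mpr (qsq_ne_one ht ht1)
  have key := qint_formula ht ht1 k
  have hpow : 0 < t ^ (1 - k) := zpow_pos ht _
  rcases lt_or_gt_of_ne (qsq_ne_one ht ht1) with h | h
  · -- t^2 < 1 : (t^2)^k < 1 for k ≥ 1
    have : (t^2)^k < 1 := by
      calc (t^2)^k ≤ (t^2)^(1:ℤ) := by
            apply zpow_le_zpow_right_of_le_one₀ hq0 h.le hk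
        _ < 1 := by simpa using h
    nlinarith [mul_pos hpow (by linarith : (0:ℝ) < 1 - (t^2)^k)]
  · have : (1:ℝ) < (t^2)^k := by
      calc (1:ℝ) < (t^2)^(1:ℤ) := by simpa using h
        _ ≤ (t^2)^k := by apply zpow_le_zpow_right₀ h.le hk
    nlinarith [mul_pos hpow (by linarith : (0:ℝ) < (t^2)^k - 1)]

lemma qfact_pos (ht : 0 < t) (ht1 : t ≠ 1) (n : ℤ) : 0 < qfact t n := by
  apply Finset.prod_pos
  intro k _
  exact qint_pos ht ht1 (by omega)

lemma qfact_ne (ht : 0 < t) (ht1 : t ≠ 1) (n : ℤ) : qfact t n ≠ 0 :=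
  ne_of_gt (qfact_pos ht ht1 n)

lemma qfact_succ (ht : 0 < t) (ht1 : t ≠ 1) {n : ℤ} (hn : 0 ≤ n) :
    qfact t (n + 1) = qfact t n * qint t (n + 1) := by
  have h1 : (n+1).toNat = n.toNat + 1 := by omega
  rw [qfact, h1, Finset.prod_range_succ, ← qfact]
  congr 2
  omega

set_option maxHeartbeats 4000000
lemma qpoch_zpow_ne (ht : 0 < t) (ht1 : t ≠ 1) (x : ℤ) (n : ℕ)
    (h : ∀ s : ℕ, s < n → x + s ≠ 0) : qpoch ((t^2)^x) (t^2) n ≠ 0 := by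
  have hq0 : (t:ℝ)^2 ≠ 0 := pow_ne_zero _ (ne_of_gt ht)
  rw [qpoch]
  apply Finset.prod_ne_zero_iff.mpr
  intro s hs
  rw [← zpow_natCast (t^2) s, ← zpow_add₀ hq0]
  exact one_sub_q_ne ht ht1 (h s (Finset.mem_range.mp hs))

lemma qpoch_base_ne (ht : 0 < t) (ht1 : t ≠ 1) (n : ℕ) : qpoch (t^2) (t^2) n ≠ 0 := by
  have := qpoch_zpow_ne ht ht1 1 n (by intro s _; omega)
  rwa [zpow_one] at this

lemma core (t : ℝ) (ht : 0 < t) (ht1 : t ≠ 1)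
    (A B C D E F ρ N c M : ℤ)
    (hE : 0 ≤ E) (hF : 0 ≤ F)
    (hρ : ρ = A+B+C+D+E+F) (hN : 2 ≤ N) (hc : 0 ≤ c)
    (hM0 : 0 ≤ M) (hMA : M ≤ A) (hMB : M ≤ B) (hMC : M ≤ C) (hMD : M ≤ D) :
    (∑ m ∈ Finset.Icc (0 : ℤ) M,
        (-1 : ℝ) ^ (ρ - m) * qfact t (ρ + N - 1 - m) *
          (qfact t (c + m) / qfact t (c + N - 2 + m)) /
          (qfact t m * qfact t (A - m) * qfact t (B - m) *
            qfact t (C - m) * qfact t (D - m) *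
            qfact t (E + m) * qfact t (F + m)))
      =
      (-1 : ℝ) ^ ρ *
        (qfact t (ρ + N - 1) * qfact t c / qfact t (c + N - 2)) /
        (qfact t A * qfact t B * qfact t C * qfact t D * qfact t E * qfact t F) *
        ∑ n ∈ Finset.range (M.toNat + 1),
          (t ^ 2) ^ n *
            (qpoch ((t ^ 2) ^ (c + 1)) (t ^ 2) n *
              qpoch ((t ^ 2) ^ (-B)) (t ^ 2) n *
              qpoch ((t ^ 2) ^ (-A)) (t ^ 2) n *
              qpoch ((t ^ 2) ^ (-D)) (t ^ 2) n *
              qpoch ((t ^ 2) ^ (-C)) (t ^ 2) n) /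
            (qpoch (t ^ 2) (t ^ 2) n *
              qpoch ((t ^ 2) ^ (c + N - 1)) (t ^ 2) n *
              qpoch ((t ^ 2) ^ (-ρ - (N - 1))) (t ^ 2) n *
              qpoch ((t ^ 2) ^ (E + 1)) (t ^ 2) n *
              qpoch ((t ^ 2) ^ (F + 1)) (t ^ 2) n) := by
  have ht0 : t ≠ 0 := ne_of_gt ht
  have hq0 : (t:ℝ)^2 ≠ 0 := pow_ne_zero _ ht0
  have hq1 : (t:ℝ)^2 - 1 ≠ 0 := sub_ne_zero.mpr (qsq_ne_one ht ht1)
  set L : ℤ → ℝ := fun m =>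
      (-1 : ℝ) ^ (ρ - m) * qfact t (ρ + N - 1 - m) *
        (qfact t (c + m) / qfact t (c + N - 2 + m)) /
        (qfact t m * qfact t (A - m) * qfact t (B - m) *
          qfact t (C - m) * qfact t (D - m) *
          qfact t (E + m) * qfact t (F + m)) with hLdef
  set R : ℕ → ℝ := fun n =>
      (t ^ 2) ^ n *
        (qpoch ((t ^ 2) ^ (c + 1)) (t ^ 2) n *
          qpoch ((t ^ 2) ^ (-B)) (t ^ 2) n *
          qpoch ((t ^ 2) ^ (-A)) (t ^ 2) n *
          qpoch ((t ^ 2) ^ (-D)) (t ^ 2) n *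
          qpoch ((t ^ 2) ^ (-C)) (t ^ 2) n) /
        (qpoch (t ^ 2) (t ^ 2) n *
          qpoch ((t ^ 2) ^ (c + N - 1)) (t ^ 2) n *
          qpoch ((t ^ 2) ^ (-ρ - (N - 1))) (t ^ 2) n *
          qpoch ((t ^ 2) ^ (E + 1)) (t ^ 2) n *
          qpoch ((t ^ 2) ^ (F + 1)) (t ^ 2) n) with hRdef
  set P : ℝ := (-1 : ℝ) ^ ρ *
      (qfact t (ρ + N - 1) * qfact t c / qfact t (c + N - 2)) /
      (qfact t A * qfact t B * qfact t C * qfact t D * qfact t E * qfact t F) with hPdef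
  have key : ∀ n : ℕ, (n:ℤ) ≤ M → L n = P * R n := by
    intro n
    induction n with
    | zero =>
      intro _
      have h0 : qfact t 0 = 1 := by simp [qfact]
      simp only [hLdef, hRdef, hPdef, Nat.cast_zero, qpoch_zero, pow_zero, sub_zero, add_zero]
      rw [h0]
      ring
    | succ n ih =>
      intro hn1
      have hn1' : (n:ℤ) + 1 ≤ M := by push_cast at hn1; omega
      have hn0 : (0:ℤ) ≤ (n:ℤ) := Int.natCast_nonneg n
      have ihn := ih (by omega)
      set nI : ℤ := (n:ℤ) with hnI
      set dL : ℝ := -(qint t (c+nI+1) * (qint t (A-nI) * qint t (B-nI) * qint t (C-nI) * qint t (D-nI))) with hdL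
      set eL : ℝ := qint t (ρ+N-1-nI) * (qint t (c+N-1+nI) * qint t (nI+1) * qint t (E+nI+1) * qint t (F+nI+1)) with heL
      set dR : ℝ := t^2 * ((1 - (t^2)^(c+nI+1)) * ((1 - (t^2)^(-(B-nI))) * (1 - (t^2)^(-(A-nI))) * (1 - (t^2)^(-(D-nI))) * (1 - (t^2)^(-(C-nI))))) with hdR
      set eR : ℝ := (1 - (t^2)^(nI+1)) * ((1 - (t^2)^(c+N-1+nI)) * (1 - (t^2)^(-(ρ+N-1-nI))) * (1 - (t^2)^(E+nI+1)) * (1 - (t^2)^(F+nI+1))) with heR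
      have heLne : eL ≠ 0 := by
        rw [heL]
        have q1 := qint_pos ht ht1 (k := ρ+N-1-nI) (by omega)
        have q2 := qint_pos ht ht1 (k := c+N-1+nI) (by omega)
        have q3 := qint_pos ht ht1 (k := nI+1) (by omega)
        have q4 := qint_pos ht ht1 (k := E+nI+1) (by omega)
        have q5 := qint_pos ht ht1 (k := F+nI+1) (by omega)
        positivity
      have heRne : eR ≠ 0 := by
        rw [heR]
        have q1 := one_sub_q_ne ht ht1 (k := nI+1) (by omega)
        have q2 := one_sub_q_ne ht ht1 (k := c+N-1+nI) (by omega)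
        have q3 := one_sub_q_ne ht ht1 (k := -(ρ+N-1-nI)) (by omega)
        have q4 := one_sub_q_ne ht ht1 (k := E+nI+1) (by omega)
        have q5 := one_sub_q_ne ht ht1 (k := F+nI+1) (by omega)
        exact mul_ne_zero q1 (mul_ne_zero (mul_ne_zero (mul_ne_zero q2 q3) q4) q5)
      have stepL : L (↑(n+1) : ℤ) * eL = L nI * dL := by
        rw [show ((↑(n+1):ℕ):ℤ) = nI + 1 by push_cast; ring]
        simp only [hLdef]
        rw [show c+(nI+1) = c+nI+1 by ring, show c+N-2+(nI+1) = c+N-1+nI by ring,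
            show E+(nI+1) = E+nI+1 by ring, show F+(nI+1) = F+nI+1 by ring]
        have g1 : qfact t (ρ+N-1-nI) = qfact t (ρ+N-1-(nI+1)) * qint t (ρ+N-1-nI) := by
          have h := qfact_succ ht ht1 (n := ρ+N-1-(nI+1)) (by omega)
          rw [show ρ+N-1-(nI+1)+1 = ρ+N-1-nI by ring] at h
          exact h
        have g2 : qfact t (c+nI+1) = qfact t (c+nI) * qint t (c+nI+1) :=
          qfact_succ ht ht1 (by omega)
        have g3 : qfact t (c+N-1+nI) = qfact t (c+N-2+nI) * qint t (c+N-1+nI) := by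
          have h := qfact_succ ht ht1 (n := c+N-2+nI) (by omega)
          rw [show c+N-2+nI+1 = c+N-1+nI by ring] at h
          exact h
        have g4 : qfact t (nI+1) = qfact t nI * qint t (nI+1) :=
          qfact_succ ht ht1 (by omega)
        have gA : qfact t (A-nI) = qfact t (A-(nI+1)) * qint t (A-nI) := by
          have h := qfact_succ ht ht1 (n := A-(nI+1)) (by omega)
          rw [show A-(nI+1)+1 = A-nI by ring] at h
          exact h
        have gB : qfact t (B-nI) = qfact t (B-(nI+1)) * qint t (B-nI) := by
          have h := qfact_succ ht ht1 (n := B-(nI+1)) (by omega)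
          rw [show B-(nI+1)+1 = B-nI by ring] at h
          exact h
        have gC : qfact t (C-nI) = qfact t (C-(nI+1)) * qint t (C-nI) := by
          have h := qfact_succ ht ht1 (n := C-(nI+1)) (by omega)
          rw [show C-(nI+1)+1 = C-nI by ring] at h
          exact h
        have gD : qfact t (D-nI) = qfact t (D-(nI+1)) * qint t (D-nI) := by
          have h := qfact_succ ht ht1 (n := D-(nI+1)) (by omega)
          rw [show D-(nI+1)+1 = D-nI by ring] at h
          exact h
        have g5 : qfact t (E+nI+1) = qfact t (E+nI) * qint t (E+nI+1) :=
          qfact_succ ht ht1 (by omega)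
        have g6 : qfact t (F+nI+1) = qfact t (F+nI) * qint t (F+nI+1) :=
          qfact_succ ht ht1 (by omega)
        have hsgn : (-1:ℝ)^(ρ-nI) = (-1:ℝ)^(ρ-(nI+1)) * (-1) := by
          rw [← zpow_add_one₀ (show (-1:ℝ) ≠ 0 by norm_num), show ρ-(nI+1)+1 = ρ-nI by ring]
        have den1 : qfact t (c+N-1+nI) * (qfact t (nI+1) * qfact t (A-(nI+1)) * qfact t (B-(nI+1)) *
            qfact t (C-(nI+1)) * qfact t (D-(nI+1)) * qfact t (E+nI+1) * qfact t (F+nI+1)) ≠ 0 := by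
          apply_rules [mul_ne_zero, qfact_ne ht ht1]
        have den2 : qfact t (c+N-2+nI) * (qfact t nI * qfact t (A-nI) * qfact t (B-nI) *
            qfact t (C-nI) * qfact t (D-nI) * qfact t (E+nI) * qfact t (F+nI)) ≠ 0 := by
          apply_rules [mul_ne_zero, qfact_ne ht ht1]
        rw [show ∀ a b x y dd : ℝ, a * b * (x / y) / dd = (a * b * x) / (y * dd) from
          by intros; ring, show ∀ a b x y dd : ℝ, a * b * (x / y) / dd = (a * b * x) / (y * dd) from
          by intros; ring]
        rw [div_mul_eq_mul_div, div_mul_eq_mul_div, div_eq_div_iff den1 den2]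
        rw [g1, g2, g3, g4, gA, gB, gC, gD, g5, g6, hsgn, hdL, heL]
        ring
      have stepR : R (n+1) * eR = R n * dR := by
        simp only [hRdef, qpoch_succ]
        rw [pow_succ ((t:ℝ)^2) n]
        have hmc : (t^2)^(c+1) * ((t:ℝ)^2)^n = (t^2)^(c+nI+1) := by
          rw [← zpow_natCast (t^2) n, ← zpow_add₀ hq0]; congr 1; omega
        have hmB : (t^2)^(-B) * ((t:ℝ)^2)^n = (t^2)^(-(B-nI)) := by
          rw [← zpow_natCast (t^2) n, ← zpow_add₀ hq0]; congr 1; omega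
        have hmA : (t^2)^(-A) * ((t:ℝ)^2)^n = (t^2)^(-(A-nI)) := by
          rw [← zpow_natCast (t^2) n, ← zpow_add₀ hq0]; congr 1; omega
        have hmD : (t^2)^(-D) * ((t:ℝ)^2)^n = (t^2)^(-(D-nI)) := by
          rw [← zpow_natCast (t^2) n, ← zpow_add₀ hq0]; congr 1; omega
        have hmC : (t^2)^(-C) * ((t:ℝ)^2)^n = (t^2)^(-(C-nI)) := by
          rw [← zpow_natCast (t^2) n, ← zpow_add₀ hq0]; congr 1; omega
        have hm1 : (t:ℝ)^2 * ((t:ℝ)^2)^n = (t^2)^(nI+1) := by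
          rw [← pow_succ', ← zpow_natCast ((t:ℝ)^2) (n+1)]; push_cast; rw [← hnI]
        have hd2 : (t^2)^(c+N-1) * ((t:ℝ)^2)^n = (t^2)^(c+N-1+nI) := by
          rw [← zpow_natCast (t^2) n, ← zpow_add₀ hq0]
        have hd3 : (t^2)^(-ρ-(N-1)) * ((t:ℝ)^2)^n = (t^2)^(-(ρ+N-1-nI)) := by
          rw [← zpow_natCast (t^2) n, ← zpow_add₀ hq0]; congr 1; omega
        have hd4 : (t^2)^(E+1) * ((t:ℝ)^2)^n = (t^2)^(E+nI+1) := by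
          rw [← zpow_natCast (t^2) n, ← zpow_add₀ hq0]; congr 1; omega
        have hd5 : (t^2)^(F+1) * ((t:ℝ)^2)^n = (t^2)^(F+nI+1) := by
          rw [← zpow_natCast (t^2) n, ← zpow_add₀ hq0]; congr 1; omega
        simp only [hmc, hmB, hmA, hmD, hmC, hm1, hd2, hd3, hd4, hd5]
        have p1 : qpoch ((t:ℝ)^2) (t^2) n ≠ 0 := qpoch_base_ne ht ht1 n
        have p2 : qpoch ((t^2)^(c+N-1)) (t^2) n ≠ 0 :=
          qpoch_zpow_ne ht ht1 _ n (by intro s hs; omega)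
        have p3 : qpoch ((t^2)^(-ρ-(N-1))) (t^2) n ≠ 0 :=
          qpoch_zpow_ne ht ht1 _ n (by intro s hs; omega)
        have p4 : qpoch ((t^2)^(E+1)) (t^2) n ≠ 0 :=
          qpoch_zpow_ne ht ht1 _ n (by intro s hs; omega)
        have p5 : qpoch ((t^2)^(F+1)) (t^2) n ≠ 0 :=
          qpoch_zpow_ne ht ht1 _ n (by intro s hs; omega)
        have qa1 := one_sub_q_ne ht ht1 (k := nI+1) (by omega)
        have qa2 := one_sub_q_ne ht ht1 (k := c+N-1+nI) (by omega)
        have qa3 := one_sub_q_ne ht ht1 (k := -(ρ+N-1-nI)) (by omega)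
        have qa4 := one_sub_q_ne ht ht1 (k := E+nI+1) (by omega)
        have qa5 := one_sub_q_ne ht ht1 (k := F+nI+1) (by omega)
        rw [hdR, heR, div_mul_eq_mul_div, div_mul_eq_mul_div,
          div_eq_div_iff (by apply_rules [mul_ne_zero, p1, p2, p3, p4, p5, qa1, qa2, qa3, qa4, qa5])
            (by apply_rules [mul_ne_zero, p1, p2, p3, p4, p5])]
        ring
      have hbr : dL * eR = dR * eL := by
        have bd1 := bracket1 ht ht1 (c+nI+1)
        have bdA := bracket2 ht ht1 (A-nI)
        have bdB := bracket2 ht ht1 (B-nI)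
        have bdC := bracket2 ht ht1 (C-nI)
        have bdD := bracket2 ht ht1 (D-nI)
        have be1 := bracket2 ht ht1 (ρ+N-1-nI)
        have be2 := bracket1 ht ht1 (c+N-1+nI)
        have be3 := bracket1 ht ht1 (nI+1)
        have be4 := bracket1 ht ht1 (E+nI+1)
        have be5 := bracket1 ht ht1 (F+nI+1)
        have hu : t^(1-(c+nI+1)) * (t^(1+(A-nI)) * t^(1+(B-nI)) * t^(1+(C-nI)) * t^(1+(D-nI))) =
            t^2 * (t^(1+(ρ+N-1-nI)) * (t^(1-(c+N-1+nI)) * t^(1-(nI+1)) * t^(1-(E+nI+1)) * t^(1-(F+nI+1)))) := by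
          rw [show ((t:ℝ)^2) = t^((2:ℕ):ℤ) from (zpow_natCast t 2).symm]
          simp only [← zpow_add₀ ht0]
          congr 1
          omega
        have e1 : dL * (t^2-1)^5 = -((qint t (c+nI+1)*(t^2-1)) * ((qint t (A-nI)*(t^2-1)) * (qint t (B-nI)*(t^2-1)) * (qint t (C-nI)*(t^2-1)) * (qint t (D-nI)*(t^2-1)))) := by
          rw [hdL]; ring
        rw [bd1, bdA, bdB, bdC, bdD] at e1
        have e2 : eL * (t^2-1)^5 = (qint t (ρ+N-1-nI)*(t^2-1)) * ((qint t (c+N-1+nI)*(t^2-1)) * (qint t (nI+1)*(t^2-1)) * (qint t (E+nI+1)*(t^2-1)) * (qint t (F+nI+1)*(t^2-1))) := by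
          rw [heL]; ring
        rw [be1, be2, be3, be4, be5] at e2
        apply mul_right_cancel₀ (pow_ne_zero 5 hq1)
        calc dL * eR * (t^2-1)^5 = (dL * (t^2-1)^5) * eR := by ring
          _ = dR * (eL * (t^2-1)^5) := by
              rw [e1, e2, hdR, heR]
              linear_combination ((1-(t^2)^(c+nI+1)) * (1-(t^2)^(-(B-nI))) * (1-(t^2)^(-(A-nI))) * (1-(t^2)^(-(D-nI))) * (1-(t^2)^(-(C-nI))) * (1-(t^2)^(nI+1)) * (1-(t^2)^(c+N-1+nI)) * (1-(t^2)^(-(ρ+N-1-nI))) * (1-(t^2)^(E+nI+1)) * (1-(t^2)^(F+nI+1))) * hu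
          _ = dR * eL * (t^2-1)^5 := by ring
      have e1' : L (↑(n+1):ℤ) = L nI * dL / eL := by rw [eq_div_iff heLne]; exact stepL
      have e2' : R (n+1) = R n * dR / eR := by rw [eq_div_iff heRne]; exact stepR
      rw [e1', ihn, e2', show P * (R n * dR / eR) = P * (R n * dR) / eR from (mul_div_assoc P (R n * dR) eR).symm,
        div_eq_div_iff heLne heRne]
      linear_combination (P * R n) * hbr
  calc (∑ m ∈ Finset.Icc (0:ℤ) M, L m)
      = ∑ n ∈ Finset.range (M.toNat+1), L n := by
        refine Finset.sum_nbij' (fun m => m.toNat) (fun n => (n:ℤ)) ?_ ?_ ?_ ?_ ?_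
        · intro a ha; simp only [Finset.mem_Icc] at ha; simp only [Finset.mem_range]; omega
        · intro a ha; simp only [Finset.mem_range] at ha; simp only [Finset.mem_Icc]; omega
        · intro a ha; simp only [Finset.mem_Icc] at ha; exact Int.toNat_of_nonneg ha.1
        · intro a ha; simp
        · intro a ha; simp only [Finset.mem_Icc] at ha
          exact congrArg L (Int.toNat_of_nonneg ha.1).symm
    _ = ∑ n ∈ Finset.range (M.toNat+1), P * R n :=
        Finset.sum_congr rfl (fun n hn => key n (by simp only [Finset.mem_range] at hn; omega))
    _ = P * ∑ n ∈ Finset.range (M.toNat+1), R n := by rw [Finset.mul_sum]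

end QHelpers

/-- the terminating `₅Φ₄` representation (type I form) of the original
multiplicity-free 6-j sum, with `c ≥ 0` playing the role of `k − m_max`. -/
theorem stmt18 (t : ℝ) (ht : 0 < t) (ht1 : t ≠ 1) (r₁ r₂ r₃ r₄ i j N c : ℤ)
    (hadm : Admissible r₁ r₂ r₃ r₄ i j N)
    (hij1 : r₁ + r₃ ≤ i + j) (hij2 : r₂ + r₄ ≤ i + j) (hc : 0 ≤ c) :
    (∑ m ∈ Finset.Icc (0 : ℤ) (mMax r₁ r₂ r₃ r₄ i j),
        (-1 : ℝ) ^ (rho r₁ r₂ r₃ r₄ - m) * qfact t (rho r₁ r₂ r₃ r₄ + N - 1 - m) *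
          (qfact t (c + m) / qfact t (c + N - 2 + m)) /
          (qfact t m * qfact t ((r₃ + r₄ - i) / 2 - m) * qfact t ((r₁ + r₂ - i) / 2 - m) *
            qfact t ((r₂ + r₃ - j) / 2 - m) * qfact t ((r₁ + r₄ - j) / 2 - m) *
            qfact t ((i + j - r₂ - r₄) / 2 + m) * qfact t ((i + j - r₁ - r₃) / 2 + m)))
      =
      (-1 : ℝ) ^ (rho r₁ r₂ r₃ r₄) *
        (qfact t (rho r₁ r₂ r₃ r₄ + N - 1) * qfact t c / qfact t (c + N - 2)) /
        (qfact t ((r₃ + r₄ - i) / 2) * qfact t ((r₁ + r₂ - i) / 2) *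
          qfact t ((r₂ + r₃ - j) / 2) * qfact t ((r₁ + r₄ - j) / 2) *
          qfact t ((i + j - r₂ - r₄) / 2) * qfact t ((i + j - r₁ - r₃) / 2)) *
        ∑ n ∈ Finset.range ((mMax r₁ r₂ r₃ r₄ i j).toNat + 1),
          (t ^ 2) ^ n *
            (qpoch ((t ^ 2) ^ (c + 1)) (t ^ 2) n *
              qpoch ((t ^ 2) ^ ((i - r₁ - r₂) / 2)) (t ^ 2) n *
              qpoch ((t ^ 2) ^ ((i - r₃ - r₄) / 2)) (t ^ 2) n *
              qpoch ((t ^ 2) ^ ((j - r₁ - r₄) / 2)) (t ^ 2) n *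
              qpoch ((t ^ 2) ^ ((j - r₂ - r₃) / 2)) (t ^ 2) n) /
            (qpoch (t ^ 2) (t ^ 2) n *
              qpoch ((t ^ 2) ^ (c + N - 1)) (t ^ 2) n *
              qpoch ((t ^ 2) ^ (-(rho r₁ r₂ r₃ r₄) - (N - 1))) (t ^ 2) n *
              qpoch ((t ^ 2) ^ ((i + j - r₂ - r₄) / 2 + 1)) (t ^ 2) n *
              qpoch ((t ^ 2) ^ ((i + j - r₁ - r₃) / 2 + 1)) (t ^ 2) n) := by
  obtain ⟨h1, h2, h3, h4, h5, h6, hN, hd1, hd2, hd3, hd4, hi1, hi2, hj1, hj2⟩ := hadm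
  have hi2a : i ≤ r₁ + r₂ := le_trans hi2 (min_le_left _ _)
  have hi2b : i ≤ r₃ + r₄ := le_trans hi2 (min_le_right _ _)
  have hj2a : j ≤ r₂ + r₃ := le_trans hj2 (min_le_left _ _)
  have hj2b : j ≤ r₁ + r₄ := le_trans hj2 (min_le_right _ _)
  rw [show (i - r₁ - r₂) / 2 = -((r₁ + r₂ - i) / 2) from by omega,
      show (i - r₃ - r₄) / 2 = -((r₃ + r₄ - i) / 2) from by omega,
      show (j - r₁ - r₄) / 2 = -((r₁ + r₄ - j) / 2) from by omega,
      show (j - r₂ - r₃) / 2 = -((r₂ + r₃ - j) / 2) from by omega]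
  exact core t ht ht1 ((r₃ + r₄ - i) / 2) ((r₁ + r₂ - i) / 2) ((r₂ + r₃ - j) / 2)
    ((r₁ + r₄ - j) / 2) ((i + j - r₂ - r₄) / 2) ((i + j - r₁ - r₃) / 2)
    (rho r₁ r₂ r₃ r₄) N c (mMax r₁ r₂ r₃ r₄ i j)
    (by omega) (by omega) (by simp only [rho]; omega) hN hc
    (by simp only [mMax]; omega) (by simp only [mMax]; omega) (by simp only [mMax]; omega)
    (by simp only [mMax]; omega) (by simp only [mMax]; omega)
end

section
/- (External symmetry of type I in the rank-preserving case.) Assume (r1,r2,r3,r4,i,j,N) is admissible, r1 + r3 = r2 + r4, and i + j = r2 + r4. Then the tuple (r1, i, r3, j, r2, r4, N), obtained by exchanging r2 ↔ i and r4 ↔ j, is admissible, satisfies r1 + r3 = i + j and r2 + r4 = i + j, and K_1(r1, i, r3, j, r2, r4; N) · F_1^N(r1, r2, i; r3, r4, j) = K_1(r1, r2, r3, r4, i, j; N) · F_1^N(r1, i, r2; r3, j, r4), where K_1(· ; N) denotes the factor K_1 evaluated at the indicated parameter tuple (both sides are well defined since m_min = 0 for both tuples). This is the M = N case of the first external symmetry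 of type I from the paper, a relation not generated by tetrahedral and Regge symmetries. -/
open Finset

lemma stmt19_aux (t : ℝ) (r₁ r₂ r₃ r₄ i j N : ℤ)
    (hfus : r₁ + r₃ = r₂ + r₄) (hij : i + j = r₂ + r₄) :
    Kfac t 1 N r₁ i r₂ r₃ j r₄ * F t 1 N r₁ r₂ i r₃ r₄ j =
      Kfac t 1 N r₁ r₂ i r₃ r₄ j * F t 1 N r₁ i r₂ r₃ j r₄ := by
  have a1 : r₃ + j - r₂ = r₃ + r₄ - i := by omega
  have a2 : i + r₃ - r₄ = r₂ + r₃ - j := by omega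
  have a3 : r₁ + j - r₄ = r₁ + r₂ - i := by omega
  have a4 : r₂ + r₄ - i - j = i + j - r₂ - r₄ := by omega
  have a5 : r₁ + i - r₂ = r₁ + r₄ - j := by omega
  have a6 : r₂ + r₄ - r₁ - r₃ = i + j - r₁ - r₃ := by omega
  have hrho : rho r₁ i r₃ j = rho r₁ r₂ r₃ r₄ := by unfold rho; omega
  have hmin : mMin r₁ i r₃ j r₂ r₄ = mMin r₁ r₂ r₃ r₄ i j := by unfold mMin; omega
  have hmax : mMax r₁ i r₃ j r₂ r₄ = mMax r₁ r₂ r₃ r₄ i j := by unfold mMax; omega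
  have e1 : Kfac t 1 N r₁ i r₂ r₃ j r₄ * Kprime t N r₁ r₂ r₃ r₄ i j =
      Kfac t 1 N r₁ r₂ i r₃ r₄ j * Kprime t N r₁ i r₃ j r₂ r₄ := by
    unfold Kfac
    simp only [if_neg (by norm_num : ¬(1:ℕ) = 2), if_pos rfl, mul_zero, mul_one, add_zero]
    rw [a1, a2, a3, a4, a5, a6, hrho]
    ring
  have e2 : (∑ m ∈ Finset.Icc (mMin r₁ i r₃ j r₂ r₄) (mMax r₁ i r₃ j r₂ r₄),
      (-1 : ℝ) ^ (rho r₁ i r₃ j - m) * qfact t (rho r₁ i r₃ j + N - 1 - m) /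
        (qfact t m * qfact t ((r₃ + j - r₂) / 2 - m) * qfact t ((i + r₃ - r₄) / 2 - m) *
          qfact t ((r₁ + j - r₄) / 2 - m) * qfact t ((r₂ + r₄ - i - j) / 2 + m) *
          qfact t ((r₁ + i - r₂) / 2 + (N - 2) * (if (1:ℕ) = 2 then 1 else 0) - m) *
          qfact t ((r₂ + r₄ - r₁ - r₃) / 2 + (N - 2) * (if (1:ℕ) = 1 then 1 else 0) + m))) =
      ∑ m ∈ Finset.Icc (mMin r₁ r₂ r₃ r₄ i j) (mMax r₁ r₂ r₃ r₄ i j),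
      (-1 : ℝ) ^ (rho r₁ r₂ r₃ r₄ - m) * qfact t (rho r₁ r₂ r₃ r₄ + N - 1 - m) /
        (qfact t m * qfact t ((r₃ + r₄ - i) / 2 - m) * qfact t ((r₂ + r₃ - j) / 2 - m) *
          qfact t ((r₁ + r₄ - j) / 2 - m) * qfact t ((i + j - r₂ - r₄) / 2 + m) *
          qfact t ((r₁ + r₂ - i) / 2 + (N - 2) * (if (1:ℕ) = 2 then 1 else 0) - m) *
          qfact t ((i + j - r₁ - r₃) / 2 + (N - 2) * (if (1:ℕ) = 1 then 1 else 0) + m)) := by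
    simp only [if_neg (by norm_num : ¬(1:ℕ) = 2), if_pos rfl, mul_zero, mul_one, add_zero]
    rw [a1, a2, a3, a4, a5, a6, hrho, hmin, hmax]
    exact Finset.sum_congr rfl fun m _ => by ring
  show _ * (Kprime t N r₁ r₂ r₃ r₄ i j * _) = _ * (Kprime t N r₁ i r₃ j r₂ r₄ * _)
  rw [e2, ← mul_assoc, ← mul_assoc, e1, mul_assoc]

/-- external symmetry of type I in the rank-preserving case: if the tuple is
admissible with `r₁ + r₃ = r₂ + r₄` and `i + j = r₂ + r₄`, then the tuple obtained by
exchanging `r₂ ↔ i` and `r₄ ↔ j` is admissible, satisfies the indicated fusion relations, and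
`K₁(r₁,i,r₃,j,r₂,r₄;N) · F_1^N(r₁,r₂,i;r₃,r₄,j) = K₁(r₁,r₂,r₃,r₄,i,j;N) · F_1^N(r₁,i,r₂;r₃,j,r₄)`. -/
theorem stmt19 (t : ℝ) (ht : 0 < t) (ht1 : t ≠ 1) (r₁ r₂ r₃ r₄ i j N : ℤ)
    (hadm : Admissible r₁ r₂ r₃ r₄ i j N)
    (hfus : r₁ + r₃ = r₂ + r₄) (hij : i + j = r₂ + r₄) :
    Admissible r₁ i r₃ j r₂ r₄ N ∧
    r₁ + r₃ = i + j ∧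
    r₂ + r₄ = i + j ∧
    Kfac t 1 N r₁ i r₂ r₃ j r₄ * F t 1 N r₁ r₂ i r₃ r₄ j =
      Kfac t 1 N r₁ r₂ i r₃ r₄ j * F t 1 N r₁ i r₂ r₃ j r₄ := by
  obtain ⟨h1, h2, h3, h4, h5, h6, hN, p1, p2, p3, p4, q1, q2, q3, q4⟩ := hadm
  simp only [max_le_iff, le_min_iff, abs_le] at q1 q2 q3 q4
  refine ⟨⟨h1, h5, h3, h6, h2, h4, hN, by omega, by omega, by omega, by omega, ?_, ?_, ?_, ?_⟩,
    by omega, by omega, stmt19_aux t r₁ r₂ r₃ r₄ i j N hfus hij⟩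
  · simp only [max_le_iff, le_min_iff, abs_le]; omega
  · simp only [max_le_iff, le_min_iff, abs_le]; omega
  · simp only [max_le_iff, le_min_iff, abs_le]; omega
  · simp only [max_le_iff, le_min_iff, abs_le]; omega
end
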